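/- arXiv:2402.07798 — 2 statements merged into one kernel-verified Lean document; each statement's English description precedes it below -/
import Mathlib

section
/- For every integer n ≥ 2, the reflection length of λ_n in the affine symmetric group W̃_n equals 2n−2: λ_n can be written as a product of 2n−2 affine reflections, and cannot be written as a product of fewer than 2n−2 affine reflections. -/
/-- The affine reflection `((i,j))` of the affine symmetric group `W̃ₙ`, as a function
`ℤ → ℤ`: it interchanges `i + k*n` and `j + k*n` for every `k ∈ ℤ` and fixes all
integers not congruent to `i` or `j` mod `n`. -/
def affRefl (n : ℕ) (i j : ℤ) : ℤ → ℤ := fun k =>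
  if (k - i) % (n : ℤ) = 0 then k - i + j
  else if (k - j) % (n : ℤ) = 0 then k - j + i
  else k

/-- `t : ℤ → ℤ` is an affine reflection of `W̃ₙ`. -/
def IsAffRefl (n : ℕ) (t : ℤ → ℤ) : Prop :=
  ∃ i j : ℤ, (i - j) % (n : ℤ) ≠ 0 ∧ t = affRefl n i j

/-- The simple reflection `sⱼ = ((j, j+1))`. -/
def simpleRefl (n : ℕ) (j : ℤ) : ℤ → ℤ := affRefl n j (j + 1)

/-- The translation `λₙ`: it sends `k ≡ 0 (mod n)` to `k - n(n-1)` and all other `k`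
to `k + n`. -/
def lam (n : ℕ) : ℤ → ℤ := fun k =>
  if k % (n : ℤ) = 0 then k - (n : ℤ) * ((n : ℤ) - 1) else k + (n : ℤ)

/-- The product `r₁ r₂ ⋯ rₘ` of a list of elements, with `(w·v)(k) = w(v(k))`. -/
def listProd (l : List (ℤ → ℤ)) : ℤ → ℤ := l.foldr (· ∘ ·) id

/-- `l` is a factorization of `λₙ` into affine reflections. -/
def IsFactorization (n : ℕ) (l : List (ℤ → ℤ)) : Prop :=
  (∀ t ∈ l, IsAffRefl n t) ∧ listProd l = lam n

/-- A tree-like factorization of `λₙ`: a factorization `[r₁, …, r_{2n-2}]` into `2n-2`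
affine reflections such that there are integers `a₀, …, a_{2n-2}` and `b₁, …, b_{2n-2}`
with `r_k = ((a_{k-1}, b_k))`, `a_{k-1} < b_k` and `a_k ≡ b_k (mod n)`
(0-based: `r` at index `k` equals `((a k, b (k+1)))`). -/
def IsTreeLike (n : ℕ) (l : List (ℤ → ℤ)) : Prop :=
  IsFactorization n l ∧ l.length = 2 * n - 2 ∧
  ∃ a b : ℕ → ℤ, ∀ k : ℕ, ∀ h : k < l.length,
    l.get ⟨k, h⟩ = affRefl n (a k) (b (k + 1)) ∧
    a k < b (k + 1) ∧ (a (k + 1) - b (k + 1)) % (n : ℤ) = 0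

/-- `a₀ < a₁ < ⋯` is a strictly increasing endpoint sequence of the factorization `l`:
`r_ℓ = ((a_{ℓ-1}, a_ℓ))` (0-based: `r` at index `k` is `((a k, a (k+1)))`). -/
def EndSeq (n : ℕ) (l : List (ℤ → ℤ)) (a : ℕ → ℤ) : Prop :=
  ∀ k : ℕ, ∀ h : k < l.length,
    a k < a (k + 1) ∧ l.get ⟨k, h⟩ = affRefl n (a k) (a (k + 1))

/-- The representative of `x` modulo `n` lying in `{1, …, n}`. -/
def resOne (n : ℕ) (x : ℤ) : ℤ := if x % (n : ℤ) = 0 then (n : ℤ) else x % (n : ℤ)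

/-- `nb_k(r)` for the endpoint sequence `a` of a tree-like factorization of `λₙ`:
the list of the residues `a_i mod n` (representatives in `{1, …, n}`), in increasing
order of the index `i ∈ {1, …, 2n-2}`, over those `i` with `a_{i-1} ≡ k (mod n)`
(0-based: indices `i < 2n-2` with `a i ≡ k`, recording the residue of `a (i+1)`). -/
def nb (n : ℕ) (a : ℕ → ℤ) (k : ℤ) : List ℤ :=
  ((List.range (2 * n - 2)).filter (fun i => decide ((a i - k) % (n : ℤ) = 0))).map
    (fun i => resOne n (a (i + 1)))

/-- A cyclic factorization of `λₙ`: a tree-like factorization such that, for an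
endpoint sequence `a` as above, (i) `nb_n` is strictly increasing; and (ii) for each
`k ∈ {1, …, n-1}`, writing `nb_k = [c₁, …, c_ℓ]`, there is `j ∈ {1, …, ℓ}` with
`c_j < c_{j+1} < ⋯ < c_{ℓ-1} < k < c₁ < ⋯ < c_{j-1}`. -/
def IsCyclicFact (n : ℕ) (l : List (ℤ → ℤ)) : Prop :=
  IsTreeLike n l ∧
  ∃ a : ℕ → ℤ, EndSeq n l a ∧
    List.Chain' (· < ·) (nb n a (n : ℤ)) ∧
    (∀ k : ℤ, 1 ≤ k → k ≤ (n : ℤ) - 1 →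
      ∃ m : ℕ, m < (nb n a k).length ∧
        List.Chain' (· < ·)
          ((nb n a k).dropLast.drop m ++ k :: (nb n a k).dropLast.take m))

/-- The letter at (0-based) position `j` of the subword of `λ̂ₙ` with skip set `S`:
the identity `e` if `j` is a skip, and the simple reflection `sⱼ` otherwise. -/
def letterAt (n : ℕ) (S : Finset ℕ) (j : ℕ) : ℤ → ℤ :=
  if j ∈ S then id else simpleRefl n (j : ℤ)

/-- The subword of the word `λ̂ₙ = [s₀, s₁, …, s_{n-1}]^{n-1}` (of length `N = n(n-1)`,
whose letter at 0-based position `j` is `s_j`) with skip set `S`. -/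
def subword (n : ℕ) (S : Finset ℕ) : List (ℤ → ℤ) :=
  (List.range (n * (n - 1))).map (letterAt n S)

/-- `u_{(j)}`: the product of the first `j` letters of the subword. -/
def uPref (n : ℕ) (S : Finset ℕ) (j : ℕ) : ℤ → ℤ :=
  listProd ((subword n S).take j)

/-- `u_{(j)}⁻¹`: since every letter is an involution, the inverse of `u_{(j)}` is the
product of the first `j` letters in reverse order. -/
def uPrefInv (n : ℕ) (S : Finset ℕ) (j : ℕ) : ℤ → ℤ :=
  listProd (((subword n S).take j).reverse)

/-- The element `t_{j+1} = u_{(j)} s_j u_{(j)}⁻¹` of `inv(u)` (0-based `j`). -/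
def conjAt (n : ℕ) (S : Finset ℕ) (j : ℕ) : ℤ → ℤ :=
  uPref n S j ∘ simpleRefl n (j : ℤ) ∘ uPrefInv n S j

/-- The (0-based) skip indices of the subword, in increasing order. -/
def skipIdx (S : Finset ℕ) : List ℕ := S.sort (· ≤ ·)

/-- The sequence `r^u` of skip reflections of the subword with skip set `S`. -/
def skipRefls (n : ℕ) (S : Finset ℕ) : List (ℤ → ℤ) :=
  (skipIdx S).map (conjAt n S)

/-- The subword with skip set `S` is a member of `S_n`: it is a subword of `λ̂ₙ`
with exactly `2n-2` skips whose product is the identity. -/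
def SnMem (n : ℕ) (S : Finset ℕ) : Prop :=
  S ⊆ Finset.range (n * (n - 1)) ∧ S.card = 2 * n - 2 ∧ listProd (subword n S) = id

/-- The product of the suffix `r_{i+1} ⋯ r_m` (0-based: drops the first `i` factors). -/
def suffixProd (l : List (ℤ → ℤ)) (i : ℕ) : ℤ → ℤ := listProd (l.drop i)

/-- The cyclic segment product `u_{a+1} u_{a+2} ⋯ u_{a+L}` of the subword with skip set
`S` (0-based starting position `a`, indices taken modulo `N = n(n-1)`). -/
def segProd (n : ℕ) (S : Finset ℕ) (a L : ℕ) : ℤ → ℤ :=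
  listProd ((List.range L).map (fun t => letterAt n S ((a + t) % (n * (n - 1)))))

section Aux




-- basic helpers
lemma intCast_eq_iff_emod (n : ℕ) (x y : ℤ) :
    ((x : ZMod n) = (y : ZMod n)) ↔ (x - y) % (n : ℤ) = 0 := by
  rw [← sub_eq_zero, ← Int.cast_sub, ZMod.intCast_zmod_eq_zero_iff_dvd,
    Int.dvd_iff_emod_eq_zero]

lemma affRefl_shift (n : ℕ) (i j k c : ℤ) :
    affRefl n i j (k + c * n) = affRefl n i j k + c * n := by
  unfold affRefl
  have h1 : (k + c * n - i) % (n:ℤ) = (k - i) % n := by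
    have : k + c * n - i = (k - i) + c * n := by ring
    rw [this, Int.add_mul_emod_self_right]
  have h2 : (k + c * n - j) % (n:ℤ) = (k - j) % n := by
    have : k + c * n - j = (k - j) + c * n := by ring
    rw [this, Int.add_mul_emod_self_right]
  rw [h1, h2]; split_ifs <;> ring

lemma lam_shift (n : ℕ) (k c : ℤ) : lam n (k + c * n) = lam n k + c * n := by
  unfold lam
  rw [Int.add_mul_emod_self_right]
  split_ifs <;> ring

def RepBy (n : ℕ) (f : ℤ → ℤ) (g : Equiv.Perm (ZMod n)) : Prop :=
  ∀ k : ℤ, ((f k : ℤ) : ZMod n) = g ((k : ℤ) : ZMod n)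

lemma repBy_affRefl (n : ℕ) (i j : ℤ) (hij : (i - j) % (n:ℤ) ≠ 0) :
    RepBy n (affRefl n i j) (Equiv.swap ((i : ℤ) : ZMod n) ((j : ℤ) : ZMod n)) := by
  intro k
  have hab : ((i : ZMod n)) ≠ (j : ZMod n) := by
    rw [Ne, intCast_eq_iff_emod]; exact hij
  unfold affRefl
  by_cases h1 : (k - i) % (n:ℤ) = 0
  · rw [if_pos h1]
    have hk : ((k : ZMod n)) = (i : ZMod n) := (intCast_eq_iff_emod n k i).2 h1
    rw [hk, Equiv.swap_apply_left]
    push_cast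
    rw [hk]; ring
  · rw [if_neg h1]
    by_cases h2 : (k - j) % (n:ℤ) = 0
    · rw [if_pos h2]
      have hk : ((k : ZMod n)) = (j : ZMod n) := (intCast_eq_iff_emod n k j).2 h2
      rw [hk, Equiv.swap_apply_right]
      push_cast
      rw [hk]; ring
    · rw [if_neg h2]
      have hk1 : ((k : ZMod n)) ≠ (i : ZMod n) := fun h => h1 ((intCast_eq_iff_emod n k i).1 h)
      have hk2 : ((k : ZMod n)) ≠ (j : ZMod n) := fun h => h2 ((intCast_eq_iff_emod n k j).1 h)
      rw [Equiv.swap_apply_of_ne_of_ne hk1 hk2]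

lemma repBy_comp (n : ℕ) (f f' : ℤ → ℤ) (g g' : Equiv.Perm (ZMod n))
    (hf : RepBy n f g) (hf' : RepBy n f' g') : RepBy n (f ∘ f') (g * g') := by
  intro k
  simp only [Function.comp_apply, Equiv.Perm.mul_apply]
  rw [hf (f' k), hf' k]


lemma listProd_append (xs ys : List (ℤ → ℤ)) :
    listProd (xs ++ ys) = listProd xs ∘ listProd ys := by
  unfold listProd
  induction xs with
  | nil => simp
  | cons x xs ih => simp [ih, Function.comp_assoc]

def upList (n : ℕ) : ℕ → List (ℤ → ℤ)
  | 0 => []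
  | (m+1) => upList n m ++ [affRefl n ((m:ℤ)+1+n) n, affRefl n ((m:ℤ)+1) n]

lemma dvd_iff_emod (n : ℕ) (x : ℤ) : (x % (n:ℤ) = 0) ↔ (n:ℤ) ∣ x :=
  ⟨Int.dvd_of_emod_eq_zero, Int.emod_eq_zero_of_dvd⟩


lemma not_dvd_small (n : ℕ) (i : ℤ) (h1 : 0 < i) (h2 : i < n) : ¬ (n:ℤ) ∣ i := by
  intro h
  have := Int.le_of_dvd h1 h
  omega

lemma emod_eq_small_iff (n : ℕ) (hn : 0 < n) (k i : ℤ) (h1 : 0 ≤ i) (h2 : i < n) :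
    k % (n:ℤ) = i ↔ (n:ℤ) ∣ (k - i) := by
  rw [← dvd_iff_emod, ← Int.emod_eq_emod_iff_emod_sub_eq_zero]
  constructor
  · intro h; rw [h, Int.emod_eq_of_lt h1 h2]
  · intro h; rw [h, Int.emod_eq_of_lt h1 h2]

lemma tau_eval (n : ℕ) (i : ℤ) (h1 : 0 < i) (h2 : i < (n:ℤ)) (k : ℤ) :
    affRefl n (i+(n:ℤ)) (n:ℤ) (affRefl n i (n:ℤ) k) =
      if k % (n:ℤ) = 0 then k - n else if k % (n:ℤ) = i then k + n else k := by
  have hn : (0:ℤ) < n := by omega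
  have hn0 : 0 < n := by exact_mod_cast hn
  have hni : ¬ (n:ℤ) ∣ i := not_dvd_small n i h1 h2
  have h0iff : k % (n:ℤ) = 0 ↔ (n:ℤ) ∣ k := by
    simpa using emod_eq_small_iff n hn0 k 0 le_rfl hn
  have hiiff : k % (n:ℤ) = i ↔ (n:ℤ) ∣ (k - i) := emod_eq_small_iff n hn0 k i (le_of_lt h1) h2
  unfold affRefl
  simp only [dvd_iff_emod, h0iff, hiiff]
  by_cases hk0 : (n:ℤ) ∣ k
  · have c1 : ¬ (n:ℤ) ∣ (k - i) := fun h => hni (by have := dvd_sub hk0 h; simpa using this)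
    rw [if_neg c1]
    have c2 : (n:ℤ) ∣ (k - n) := dvd_sub hk0 (dvd_refl _)
    rw [if_pos c2]
    have c3 : (n:ℤ) ∣ (k - (n:ℤ) + i - (i + (n:ℤ))) := by
      have : k - (n:ℤ) + i - (i + (n:ℤ)) = k - 2*n := by ring
      rw [this]
      exact dvd_sub hk0 (Dvd.dvd.mul_left (dvd_refl _) 2)
    rw [if_pos c3, if_pos hk0]
    ring
  · by_cases hki : (n:ℤ) ∣ (k - i)
    · rw [if_pos hki]
      have c1 : ¬ (n:ℤ) ∣ (k - i + (n:ℤ) - (i + (n:ℤ))) := by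
        intro h
        have e : k - i + (n:ℤ) - (i + (n:ℤ)) = (k - i) - i := by ring
        rw [e] at h
        exact hni (by have := dvd_sub hki h; simpa using this)
      rw [if_neg c1]
      have c2 : (n:ℤ) ∣ (k - i + (n:ℤ) - (n:ℤ)) := by simpa using hki
      rw [if_pos c2, if_neg hk0, if_pos hki]
      ring
    · rw [if_neg hki]
      have c2 : ¬ (n:ℤ) ∣ (k - n) := fun h => hk0 (by have := dvd_add h (dvd_refl (n:ℤ)); simpa using this)
      rw [if_neg c2]
      have c3 : ¬ (n:ℤ) ∣ (k - (i + (n:ℤ))) := by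
        intro h
        have e : k - i = (k - (i + n)) + n := by ring
        exact hki (e ▸ dvd_add h (dvd_refl _))
      rw [if_neg c3, if_neg hk0, if_neg hki, if_neg c2]

lemma upList_length (n m : ℕ) : (upList n m).length = 2 * m := by
  induction m with
  | zero => rfl
  | succ m ih => simp [upList, ih]; omega

lemma emod_shift_n (n : ℕ) (a : ℤ) : (a + (n:ℤ)) % (n:ℤ) = a % (n:ℤ) := by
  have : a + (n:ℤ) = a + 1 * n := by ring
  rw [this, Int.add_mul_emod_self_right]

lemma emod_shift_n' (n : ℕ) (a : ℤ) : (a - (n:ℤ)) % (n:ℤ) = a % (n:ℤ) := by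
  have : a - (n:ℤ) = a + (-1) * n := by ring
  rw [this, Int.add_mul_emod_self_right]

lemma upList_mem (n m : ℕ) (hm : m < n) : ∀ f ∈ upList n m, IsAffRefl n f := by
  induction m with
  | zero => intro f hf; simp [upList] at hf
  | succ m ih =>
    intro f hf
    simp only [upList, List.mem_append, List.mem_cons, List.mem_singleton] at hf
    have hmod : ((m:ℤ) + 1 - n) % (n:ℤ) ≠ 0 := by
      rw [emod_shift_n']
      intro h
      exact not_dvd_small n ((m:ℤ)+1) (by omega) (by push_cast; omega)
        (Int.dvd_of_emod_eq_zero h)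
    rcases hf with h | h | h | h
    · exact ih (by omega) f h
    · refine ⟨(m:ℤ)+1+n, n, ?_, h⟩
      have e : (m:ℤ)+1+(n:ℤ)-(n:ℤ) = (m:ℤ)+1-(n:ℤ)+(n:ℤ) := by ring
      rw [e, emod_shift_n]
      exact hmod
    · exact ⟨(m:ℤ)+1, n, hmod, h⟩
    · simp at h

lemma upList_prod (n : ℕ) : ∀ m : ℕ, m < n → ∀ k : ℤ,
    listProd (upList n m) k =
      if k % (n:ℤ) = 0 then k - n * m else if k % (n:ℤ) ≤ m then k + n else k := by
  intro m
  induction m with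
  | zero =>
    intro _ k
    have hn0 : 0 < n := by omega
    have hkn : 0 ≤ k % (n:ℤ) := Int.emod_nonneg k (by positivity)
    simp only [listProd, upList, List.foldr_nil, id_eq, Nat.cast_zero]
    by_cases h : k % (n:ℤ) = 0
    · rw [if_pos h]; ring
    · rw [if_neg h, if_neg (by omega)]
  | succ m ih =>
    intro hm k
    have hn0 : 0 < n := by omega
    have hnz : (n:ℤ) ≠ 0 := by positivity
    have hkn : 0 ≤ k % (n:ℤ) := Int.emod_nonneg k hnz
    have hkn2 : k % (n:ℤ) < n := Int.emod_lt_of_pos k (by positivity)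
    have hm' : m < n := by omega
    rw [upList, listProd_append]
    have e0 : listProd [affRefl n ((m:ℤ)+1+n) n, affRefl n ((m:ℤ)+1) n] =
        fun k => affRefl n ((m:ℤ)+1+(n:ℤ)) (n:ℤ) (affRefl n ((m:ℤ)+1) (n:ℤ) k) := rfl
    rw [e0]
    simp only [Function.comp_apply]
    rw [tau_eval n ((m:ℤ)+1) (by omega) (by push_cast; omega) k]
    by_cases hk0 : k % (n:ℤ) = 0
    · rw [if_pos hk0, if_pos hk0, ih hm' (k - n)]
      rw [emod_shift_n', if_pos hk0]
      push_cast
      ring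
    · rw [if_neg hk0, if_neg hk0]
      by_cases hki : k % (n:ℤ) = (m:ℤ)+1
      · rw [if_pos hki, ih hm' (k+n), emod_shift_n]
        rw [if_neg hk0, if_neg (by omega), if_pos (by push_cast; omega)]
      · rw [if_neg hki, ih hm' k, if_neg hk0]
        by_cases hle : k % (n:ℤ) ≤ (m:ℤ)
        · rw [if_pos hle, if_pos (by push_cast; omega)]
        · rw [if_neg hle, if_neg (by push_cast; omega)]

lemma upper_bound (n : ℕ) (hn : 2 ≤ n) :
    ∃ l : List (ℤ → ℤ), (∀ t ∈ l, IsAffRefl n t) ∧ l.length = 2 * n - 2 ∧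
      listProd l = lam n := by
  refine ⟨upList n (n-1), upList_mem n (n-1) (by omega), ?_, ?_⟩
  · rw [upList_length]; omega
  · funext k
    have hnz : (n:ℤ) ≠ 0 := by positivity
    have hkn : 0 ≤ k % (n:ℤ) := Int.emod_nonneg k hnz
    have hkn2 : k % (n:ℤ) < n := Int.emod_lt_of_pos k (by positivity)
    rw [upList_prod n (n-1) (by omega) k]
    unfold lam
    by_cases h : k % (n:ℤ) = 0
    · rw [if_pos h, if_pos h]
      have : ((n-1 : ℕ) : ℤ) = (n:ℤ) - 1 := by push_cast [Nat.cast_sub (by omega : 1 ≤ n)]; ring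
      rw [this]
    · rw [if_neg h, if_neg h, if_pos (by push_cast [Nat.cast_sub (by omega : 1 ≤ n)]; omega)]


open Module

-- the elementary "indicator" vectors
def sing (n : ℕ) (x : ZMod n) : ZMod n → ℚ := fun u => if u = x then 1 else 0

def AA (n : ℕ) (g : Equiv.Perm (ZMod n)) : (ZMod n → ℚ) →ₗ[ℚ] (ZMod n → ℚ) :=
  LinearMap.funLeft ℚ ℚ g - LinearMap.id

lemma AA_apply (n : ℕ) (g : Equiv.Perm (ZMod n)) (x : ZMod n → ℚ) (u : ZMod n) :
    AA n g x u = x (g u) - x u := rfl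

noncomputable def rho (n : ℕ) (g : Equiv.Perm (ZMod n)) : ℕ := finrank ℚ (LinearMap.range (AA n g))

lemma AA_one (n : ℕ) : AA n 1 = 0 := by
  ext x u; simp [AA_apply]

lemma rho_one (n : ℕ) : rho n 1 = 0 := by
  rw [rho, AA_one, LinearMap.range_zero]
  exact finrank_bot ℚ _

lemma AA_mul (n : ℕ) (g h : Equiv.Perm (ZMod n)) :
    AA n (g * h) = (LinearMap.funLeft ℚ ℚ h).comp (AA n g) + AA n h := by
  ext x u
  show x ((g * h) u) - x u = ((AA n g) x) (h u) + (x (h u) - x u)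
  rw [AA_apply, Equiv.Perm.mul_apply]
  ring

lemma AA_swap_apply (n : ℕ) (a b : ZMod n) (hab : a ≠ b) (x : ZMod n → ℚ) :
    AA n (Equiv.swap a b) x = (x b - x a) • (sing n a - sing n b) := by
  funext u
  simp only [AA_apply, Pi.smul_apply, Pi.sub_apply, sing, smul_eq_mul]
  rcases eq_or_ne u a with rfl | hua
  · rw [Equiv.swap_apply_left, if_pos rfl, if_neg hab]; ring
  · rcases eq_or_ne u b with rfl | hub
    · rw [Equiv.swap_apply_right, if_neg (Ne.symm hab), if_pos rfl]; ring
    · rw [Equiv.swap_apply_of_ne_of_ne hua hub, if_neg hua, if_neg hub]; ring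

lemma sing_sub_ne_zero (n : ℕ) (a b : ZMod n) (hab : a ≠ b) : sing n a - sing n b ≠ 0 := by
  intro h
  have := congrFun h a
  simp [sing, if_neg hab] at this

-- rank of sum of two maps
lemma finrank_range_add_le (K V W : Type*) [Field K] [AddCommGroup V] [Module K V]
    [AddCommGroup W] [Module K W] [FiniteDimensional K W]
    (f g : V →ₗ[K] W) :
    finrank K (LinearMap.range (f + g)) ≤
      finrank K (LinearMap.range f) + finrank K (LinearMap.range g) := by
  have hle : LinearMap.range (f + g) ≤ LinearMap.range f ⊔ LinearMap.range g := by
    rintro y ⟨x, rfl⟩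
    exact Submodule.add_mem_sup (LinearMap.mem_range_self f x) (LinearMap.mem_range_self g x)
  calc finrank K (LinearMap.range (f + g))
      ≤ finrank K ↥(LinearMap.range f ⊔ LinearMap.range g) := Submodule.finrank_mono hle
    _ ≤ _ := by
        have h2 := Submodule.finrank_sup_add_finrank_inf_eq
          (LinearMap.range f) (LinearMap.range g)
        omega

lemma finrank_range_comp_funLeft (n : ℕ) (τ : Equiv.Perm (ZMod n))
    (f : (ZMod n → ℚ) →ₗ[ℚ] (ZMod n → ℚ)) :
    finrank ℚ (LinearMap.range ((LinearMap.funLeft ℚ ℚ ⇑τ).comp f)) =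
      finrank ℚ (LinearMap.range f) := by
  rw [LinearMap.range_comp]
  have : (LinearMap.funLeft ℚ ℚ ⇑τ) = (LinearEquiv.funCongrLeft ℚ ℚ τ).toLinearMap := rfl
  rw [this]
  exact LinearEquiv.finrank_map_eq _ _

lemma rho_mul_swap_le (n : ℕ) [NeZero n] (g : Equiv.Perm (ZMod n)) (a b : ZMod n) (hab : a ≠ b) :
    rho n (g * Equiv.swap a b) ≤ rho n g + 1 := by
  rw [rho, rho, AA_mul]
  refine le_trans (finrank_range_add_le ℚ _ _ _ _) ?_
  rw [finrank_range_comp_funLeft]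
  have h1 : LinearMap.range (AA n (Equiv.swap a b)) ≤
      Submodule.span ℚ {sing n a - sing n b} := by
    rintro y ⟨x, rfl⟩
    rw [AA_swap_apply n a b hab]
    exact Submodule.smul_mem _ _ (Submodule.mem_span_singleton_self _)
  have h2 : finrank ℚ ↥(Submodule.span ℚ {sing n a - sing n b}) = 1 :=
    finrank_span_singleton (sing_sub_ne_zero n a b hab)
  have := Submodule.finrank_mono h1
  omega

lemma rho_swap_mul_ge (n : ℕ) [NeZero n] (g : Equiv.Perm (ZMod n)) (a b : ZMod n) (hab : a ≠ b) :
    rho n g ≤ rho n (g * Equiv.swap a b) + 1 := by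
  have := rho_mul_swap_le n (g * Equiv.swap a b) a b hab
  rwa [mul_assoc, Equiv.swap_mul_self, mul_one] at this

lemma funLeft_perm_inj (n : ℕ) (τ : Equiv.Perm (ZMod n)) (z : ZMod n → ℚ)
    (h : LinearMap.funLeft ℚ ℚ ⇑τ z = 0) : z = 0 := by
  funext u
  have := congrFun h (τ.symm u)
  simpa [LinearMap.funLeft_apply] using this

lemma rank_step (n : ℕ) [NeZero n] (g : Equiv.Perm (ZMod n)) (a b : ZMod n) (hab : a ≠ b)
    (V : Submodule ℚ (ZMod n → ℚ)) (hrange : LinearMap.range (AA n g) ≤ V)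
    (hd : (sing n a - sing n b) ∉ V)
    (x0 : ZMod n → ℚ) (hx0 : ∀ u, x0 (g u) = x0 u) (hx0a : x0 a = 1) (hx0b : x0 b = 0) :
    rho n (g * Equiv.swap a b) = rho n g + 1 := by
  classical
  set τ := Equiv.swap a b with hτ
  set dab := sing n a - sing n b with hdab
  -- the linear functional x ↦ x a - x b
  set φ : (ZMod n → ℚ) →ₗ[ℚ] ℚ :=
    (LinearMap.proj a : (ZMod n → ℚ) →ₗ[ℚ] ℚ) - (LinearMap.proj b : (ZMod n → ℚ) →ₗ[ℚ] ℚ) with hφ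
  have hφ_apply : ∀ x : ZMod n → ℚ, φ x = x a - x b := fun x => rfl
  -- kernel identification
  have hker : LinearMap.ker (AA n (g * τ)) = LinearMap.ker (AA n g) ⊓ LinearMap.ker φ := by
    ext x
    simp only [LinearMap.mem_ker, Submodule.mem_inf]
    constructor
    · intro hx
      have hx' : (LinearMap.funLeft ℚ ℚ ⇑τ) (AA n g x) + AA n τ x = 0 := by
        rw [← LinearMap.comp_apply, ← LinearMap.add_apply, ← AA_mul]; exact hx
      -- evaluate to get AA n g x = (x b - x a) • dab
      have hz : AA n g x = (x b - x a) • dab := by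
        funext u
        have h1 := congrFun hx' (τ u)
        simp only [LinearMap.funLeft_apply, Pi.add_apply, Pi.zero_apply] at h1
        have hττ : τ (τ u) = u := Equiv.swap_apply_self a b u
        rw [hττ] at h1
        have h2 : AA n τ x (τ u) = (x b - x a) * (sing n a - sing n b) (τ u) := by
          rw [AA_swap_apply n a b hab]; rfl
        have h3 : (sing n a - sing n b) (τ u) = -((sing n a - sing n b) u) := by
          rcases eq_or_ne u a with rfl | hua
          · simp [sing, hτ, Equiv.swap_apply_left, hab, Ne.symm hab]
          · rcases eq_or_ne u b with rfl | hub
            · simp [sing, hτ, Equiv.swap_apply_right, hab, Ne.symm hab]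
            · simp [sing, hτ, Equiv.swap_apply_of_ne_of_ne hua hub, hua, hub]
        rw [h2, h3] at h1
        have : AA n g x u = (x b - x a) * ((sing n a - sing n b) u) := by linarith
        simpa [hdab] using this
      have hxab : x a = x b := by
        by_contra hne
        have hne' : x b - x a ≠ 0 := by
          intro h
          apply hne
          have := sub_eq_zero.mp h
          linarith
        have : dab = (x b - x a)⁻¹ • (AA n g x) := by
          rw [hz, smul_smul, inv_mul_cancel₀ hne', one_smul]
        have hmem : AA n g x ∈ V := hrange (LinearMap.mem_range_self _ x)
        rw [this] at hd
        exact hd (Submodule.smul_mem _ _ hmem)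
      refine ⟨?_, ?_⟩
      · rw [hz, show x b - x a = 0 by rw [hxab]; ring, zero_smul]
      · rw [hφ_apply, hxab, sub_self]
    · rintro ⟨h1, h2⟩
      have hAAτ : AA n τ x = 0 := by
        have h2' : x a - x b = 0 := h2
        rw [AA_swap_apply n a b hab, show x b - x a = 0 by linarith, zero_smul]
      rw [AA_mul, LinearMap.add_apply, LinearMap.comp_apply, h1, map_zero, hAAτ, add_zero]
  -- x0 is in ker (AA n g) and φ x0 = 1
  have hx0ker : x0 ∈ LinearMap.ker (AA n g) := by
    rw [LinearMap.mem_ker]; funext u; rw [AA_apply, hx0, sub_self]; rfl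
  -- ψ := φ restricted to ker (AA n g) is surjective
  set ψ : (LinearMap.ker (AA n g)) →ₗ[ℚ] ℚ := φ.comp (LinearMap.ker (AA n g)).subtype with hψ
  have hψsurj : LinearMap.range ψ = ⊤ := by
    rw [Submodule.eq_top_iff']
    intro c
    refine ⟨c • ⟨x0, hx0ker⟩, ?_⟩
    rw [map_smul]
    have : ψ ⟨x0, hx0ker⟩ = 1 := by
      simp only [hψ, LinearMap.comp_apply, Submodule.coe_subtype, hφ_apply, hx0a, hx0b,
        sub_zero]
    rw [this, smul_eq_mul, mul_one]
  have hrn := LinearMap.finrank_range_add_finrank_ker ψ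
  rw [hψsurj, finrank_top, finrank_self] at hrn
  have hkerψ : finrank ℚ (LinearMap.ker ψ) =
      finrank ℚ ↥(LinearMap.ker (AA n g) ⊓ LinearMap.ker φ) := by
    have h1 : LinearMap.ker ψ = Submodule.comap (LinearMap.ker (AA n g)).subtype
        (LinearMap.ker φ) := by
      rw [hψ, LinearMap.ker_comp]
    rw [h1, ← Submodule.map_comap_subtype]
    exact (Submodule.finrank_map_subtype_eq _ _).symm
  -- rank-nullity for both
  have hrn1 := LinearMap.finrank_range_add_finrank_ker (AA n g)
  have hrn2 := LinearMap.finrank_range_add_finrank_ker (AA n (g * τ))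
  rw [hker] at hrn2
  rw [rho, rho]
  omega

section comb
variable {n : ℕ} (A B : ℕ → ZMod n)

def dvec (s : ℕ) : ZMod n → ℚ := sing n (A s) - sing n (B s)

def Vspan (t : ℕ) : Submodule ℚ (ZMod n → ℚ) :=
  Submodule.span ℚ (dvec A B '' {s : ℕ | s < t})

def sigmaPerm (t : ℕ) : Equiv.Perm (ZMod n) :=
  ((List.range t).map (fun s => Equiv.swap (A s) (B s))).prod

def StepRel (t : ℕ) (u v : ZMod n) : Prop :=
  ∃ s, s < t ∧ ((u = A s ∧ v = B s) ∨ (u = B s ∧ v = A s))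

def Reach (t : ℕ) : ZMod n → ZMod n → Prop := Relation.EqvGen (StepRel A B t)

lemma sigmaPerm_zero : sigmaPerm A B 0 = 1 := rfl

lemma sigmaPerm_succ (t : ℕ) :
    sigmaPerm A B (t+1) = sigmaPerm A B t * Equiv.swap (A t) (B t) := by
  unfold sigmaPerm
  rw [List.range_succ, List.map_append, List.prod_append]
  simp

lemma Vspan_mono {t t' : ℕ} (h : t ≤ t') : Vspan A B t ≤ Vspan A B t' :=
  Submodule.span_mono (Set.image_mono (fun s hs => lt_of_lt_of_le hs h))

lemma dvec_mem_Vspan {s t : ℕ} (h : s < t) : dvec A B s ∈ Vspan A B t :=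
  Submodule.subset_span ⟨s, h, rfl⟩

lemma Vspan_succ (t : ℕ) :
    Vspan A B (t+1) = Vspan A B t ⊔ Submodule.span ℚ {dvec A B t} := by
  unfold Vspan
  rw [← Submodule.span_union]
  congr 1
  ext x
  simp only [Set.mem_image, Set.mem_setOf_eq, Set.mem_union, Set.mem_singleton_iff]
  constructor
  · rintro ⟨s, hs, rfl⟩
    rcases Nat.lt_succ_iff_lt_or_eq.1 hs with h | rfl
    · exact Or.inl ⟨s, h, rfl⟩
    · exact Or.inr rfl
  · rintro (⟨s, hs, rfl⟩ | rfl)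
    · exact ⟨s, Nat.lt_succ_of_lt hs, rfl⟩
    · exact ⟨t, Nat.lt_succ_self t, rfl⟩

lemma reach_dvec {t : ℕ} {u v : ZMod n} (h : Reach A B t u v) :
    sing n u - sing n v ∈ Vspan A B t := by
  induction h with
  | rel u v huv =>
    obtain ⟨s, hs, hcase⟩ := huv
    rcases hcase with ⟨rfl, rfl⟩ | ⟨rfl, rfl⟩
    · exact dvec_mem_Vspan A B hs
    · have : sing n (B s) - sing n (A s) = -(dvec A B s) := by unfold dvec; ring
      rw [this]
      exact Submodule.neg_mem _ (dvec_mem_Vspan A B hs)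
  | refl u => simp
  | symm u v _ ih =>
    have : sing n v - sing n u = -(sing n u - sing n v) := by ring
    rw [this]; exact Submodule.neg_mem _ ih
  | trans u v w _ _ ih1 ih2 =>
    have : sing n u - sing n w = (sing n u - sing n v) + (sing n v - sing n w) := by ring
    rw [this]; exact Submodule.add_mem _ ih1 ih2

lemma reach_symm {t : ℕ} {u v : ZMod n} (h : Reach A B t u v) : Reach A B t v u :=
  Relation.EqvGen.symm _ _ h

lemma reach_trans {t : ℕ} {u v w : ZMod n} (h : Reach A B t u v) (h' : Reach A B t v w) :
    Reach A B t u w := Relation.EqvGen.trans _ _ _ h h'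

lemma sigma_fix (t : ℕ) (z : ZMod n → ℚ) (hz : ∀ s, s < t → z (A s) = z (B s)) :
    ∀ u, z (sigmaPerm A B t u) = z u := by
  induction t with
  | zero => intro u; rw [sigmaPerm_zero]; rfl
  | succ t ih =>
    intro u
    rw [sigmaPerm_succ, Equiv.Perm.mul_apply]
    rw [ih (fun s hs => hz s (Nat.lt_succ_of_lt hs))]
    rcases eq_or_ne u (A t) with rfl | hua
    · rw [Equiv.swap_apply_left]; exact (hz t (Nat.lt_succ_self t)).symm
    · rcases eq_or_ne u (B t) with rfl | hub
      · rw [Equiv.swap_apply_right]; exact hz t (Nat.lt_succ_self t)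
      · rw [Equiv.swap_apply_of_ne_of_ne hua hub]

lemma range_AA_sigma_le (hab : ∀ s, A s ≠ B s) (t : ℕ) :
    LinearMap.range (AA n (sigmaPerm A B t)) ≤ Vspan A B t := by
  induction t with
  | zero =>
    rw [sigmaPerm_zero, AA_one, LinearMap.range_zero]
    exact bot_le
  | succ t ih =>
    rw [sigmaPerm_succ, AA_mul]
    rintro y ⟨x, rfl⟩
    rw [LinearMap.add_apply]
    apply Submodule.add_mem
    · -- funLeft swap of something in range AA sigma t
      rw [LinearMap.comp_apply]
      obtain ⟨z, hz, hy⟩ : ∃ z ∈ Vspan A B t,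
          (LinearMap.funLeft ℚ ℚ ⇑(Equiv.swap (A t) (B t))) z =
          (LinearMap.funLeft ℚ ℚ ⇑(Equiv.swap (A t) (B t))) ((AA n (sigmaPerm A B t)) x) :=
        ⟨_, ih (LinearMap.mem_range_self _ x), rfl⟩
      rw [← hy]
      -- show funLeft swap maps Vspan t into Vspan (t+1)
      have key : ∀ z ∈ Vspan A B t,
          (LinearMap.funLeft ℚ ℚ ⇑(Equiv.swap (A t) (B t))) z ∈ Vspan A B (t+1) := by
        intro z hzmem
        have : Submodule.map (LinearMap.funLeft ℚ ℚ ⇑(Equiv.swap (A t) (B t)))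
            (Vspan A B t) ≤ Vspan A B (t+1) := by
          unfold Vspan
          rw [Submodule.map_span_le]
          rintro _ ⟨s, hs, rfl⟩
          have expand : (LinearMap.funLeft ℚ ℚ ⇑(Equiv.swap (A t) (B t))) (dvec A B s) =
              dvec A B s + ((dvec A B s (B t)) - (dvec A B s (A t))) • dvec A B t := by
            funext u
            simp only [LinearMap.funLeft_apply, Pi.add_apply, Pi.smul_apply, smul_eq_mul]
            unfold dvec sing
            rcases eq_or_ne u (A t) with rfl | hua
            · rw [Equiv.swap_apply_left]
              simp only [Pi.sub_apply, if_neg (hab t), if_neg (Ne.symm (hab t)),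
                eq_self_iff_true, if_true]
              ring
            · rcases eq_or_ne u (B t) with rfl | hub
              · rw [Equiv.swap_apply_right]
                simp only [Pi.sub_apply, if_neg (hab t), if_neg (Ne.symm (hab t)),
                  eq_self_iff_true, if_true]
                ring
              · rw [Equiv.swap_apply_of_ne_of_ne hua hub]
                simp only [Pi.sub_apply, if_neg hua, if_neg hub]
                ring
          rw [expand]
          exact Submodule.add_mem _ (Vspan_mono A B (Nat.le_succ t) (dvec_mem_Vspan A B hs))
            (Submodule.smul_mem _ _ (dvec_mem_Vspan A B (Nat.lt_succ_self t)))
        exact this ⟨z, hzmem, rfl⟩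
      exact key _ hz
    · -- AA swap range
      have := AA_swap_apply n (A t) (B t) (hab t) x
      rw [this]
      exact Submodule.smul_mem _ _ (dvec_mem_Vspan A B (Nat.lt_succ_self t))

end comb


end Aux


section LowerAux
open Module

lemma val_intCast (n : ℕ) [NeZero n] (x : ZMod n) : (((x.val : ℤ)) : ZMod n) = x := by
  push_cast
  exact ZMod.natCast_rightInverse x

lemma lam_rep (n : ℕ) (k : ℤ) : ((lam n k : ℤ) : ZMod n) = (k : ZMod n) := by
  unfold lam
  split_ifs <;> push_cast <;> simp [ZMod.natCast_self]

lemma vstep (n : ℕ) [NeZero n] (i j : ℤ) (hij : (i - j) % (n:ℤ) ≠ 0) (f : ℤ → ℤ)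
    (hf : ∀ k c : ℤ, f (k + c * n) = f k + c * n) :
    (fun x : ZMod n => ((f (affRefl n i j (x.val : ℤ)) - (x.val : ℤ) : ℤ) : ℚ))
      = (fun x : ZMod n => ((f (x.val : ℤ) - (x.val : ℤ) : ℤ) : ℚ))
        + ((((f ((((j : ZMod n)).val : ℤ)) - (((j : ZMod n)).val : ℤ) : ℤ) : ℚ)
           - ((f ((((i : ZMod n)).val : ℤ)) - (((i : ZMod n)).val : ℤ) : ℤ) : ℚ))
           + ((j - i : ℤ) : ℚ)) • (sing n ((i : ZMod n)) - sing n ((j : ZMod n))) := by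
  have hab : ((i : ZMod n)) ≠ (j : ZMod n) := by
    rw [Ne, intCast_eq_iff_emod]; exact hij
  funext x
  set a : ZMod n := (i : ZMod n) with ha
  set b : ZMod n := (j : ZMod n) with hb
  have hxa_iff : x = a ↔ ((x.val : ℤ) - i) % (n:ℤ) = 0 := by
    rw [← intCast_eq_iff_emod, val_intCast, ha]
  have hxb_iff : x = b ↔ ((x.val : ℤ) - j) % (n:ℤ) = 0 := by
    rw [← intCast_eq_iff_emod, val_intCast, hb]
  simp only [Pi.add_apply, Pi.smul_apply, Pi.sub_apply, smul_eq_mul, sing]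
  rcases eq_or_ne x a with rfl | hxa
  · have h1 : (((a.val : ℤ)) - i) % (n:ℤ) = 0 := hxa_iff.1 rfl
    rw [show affRefl n i j (a.val : ℤ) = (a.val : ℤ) - i + j from by unfold affRefl; rw [if_pos h1]]
    -- (a.val - i + j) ≡ b.val mod n
    have h2 : (n:ℤ) ∣ ((a.val : ℤ) - i + j - (b.val : ℤ)) := by
      rw [← ZMod.intCast_zmod_eq_zero_iff_dvd]
      push_cast
      rw [ZMod.natCast_rightInverse a, ZMod.natCast_rightInverse b]
      rw [ha, hb]
      ring
    obtain ⟨c', hc'⟩ := h2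
    have h3 : (a.val : ℤ) - i + j = (b.val : ℤ) + c' * (n : ℤ) := by linarith [hc']
    rw [h3, hf]
    rw [if_pos rfl, if_neg hab]
    push_cast
    have : ((b.val : ℤ) : ℚ) + (c' : ℚ) * (n : ℚ) = (a.val : ℚ) - (i:ℚ) + (j:ℚ) := by
      exact_mod_cast congrArg (fun z : ℤ => (z : ℚ)) h3.symm
    push_cast at this
    linarith [this]
  · rcases eq_or_ne x b with rfl | hxb
    · have h1 : ¬ (((b.val : ℤ)) - i) % (n:ℤ) = 0 := fun h => hxa (hxa_iff.2 h)
      have h2 : (((b.val : ℤ)) - j) % (n:ℤ) = 0 := hxb_iff.1 rfl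
      rw [show affRefl n i j (b.val : ℤ) = (b.val : ℤ) - j + i from by
        unfold affRefl; rw [if_neg h1, if_pos h2]]
      have h3 : (n:ℤ) ∣ ((b.val : ℤ) - j + i - (a.val : ℤ)) := by
        rw [← ZMod.intCast_zmod_eq_zero_iff_dvd]
        push_cast
        rw [ZMod.natCast_rightInverse a, ZMod.natCast_rightInverse b]
        rw [ha, hb]
        ring
      obtain ⟨c', hc'⟩ := h3
      have h4 : (b.val : ℤ) - j + i = (a.val : ℤ) + c' * (n : ℤ) := by linarith [hc']
      rw [h4, hf]
      rw [if_neg (Ne.symm hab), if_pos rfl]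
      push_cast
      have : ((a.val : ℤ) : ℚ) + (c' : ℚ) * (n : ℚ) = (b.val : ℚ) - (j:ℚ) + (i:ℚ) := by
        exact_mod_cast congrArg (fun z : ℤ => (z : ℚ)) h4.symm
      push_cast at this
      linarith [this]
    · have h1 : ¬ (((x.val : ℤ)) - i) % (n:ℤ) = 0 := fun h => hxa (hxa_iff.2 h)
      have h2 : ¬ (((x.val : ℤ)) - j) % (n:ℤ) = 0 := fun h => hxb (hxb_iff.2 h)
      rw [show affRefl n i j (x.val : ℤ) = (x.val : ℤ) from by
        unfold affRefl; rw [if_neg h1, if_neg h2]]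
      rw [if_neg hxa, if_neg hxb]
      ring

end LowerAux


section MainLower
open Module

lemma lower_aux (n : ℕ) (hn : 2 ≤ n) (m : ℕ) (I J : ℕ → ℤ) (w : ℕ → ℤ → ℤ)
    (hne : ∀ s : ℕ, (I s - J s) % (n:ℤ) ≠ 0)
    (hw0 : w 0 = id)
    (hws : ∀ t, t < m → w (t+1) = w t ∘ affRefl n (I t) (J t))
    (hwm : w m = lam n) :
    2 * n - 2 ≤ m := by
  classical
  haveI : NeZero n := ⟨by omega⟩
  set A : ℕ → ZMod n := fun s => ((I s : ℤ) : ZMod n) with hA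
  set B : ℕ → ZMod n := fun s => ((J s : ℤ) : ZMod n) with hB
  have hab : ∀ s, A s ≠ B s := fun s => by
    rw [hA, hB, Ne, intCast_eq_iff_emod]; exact hne s
  -- equivariance of prefix products
  have heq : ∀ t, t ≤ m → ∀ k c : ℤ, w t (k + c * n) = w t k + c * n := by
    intro t
    induction t with
    | zero => intro _ k c; rw [hw0]; rfl
    | succ t ih =>
      intro ht k c
      rw [hws t (by omega)]
      simp only [Function.comp_apply]
      rw [affRefl_shift, ih (by omega)]
  -- representation by permutations of ZMod n
  have hrep : ∀ t, t ≤ m → RepBy n (w t) (sigmaPerm A B t) := by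
    intro t
    induction t with
    | zero => intro _ k; rw [hw0, sigmaPerm_zero]; rfl
    | succ t ih =>
      intro ht
      rw [hws t (by omega), sigmaPerm_succ]
      exact repBy_comp n _ _ _ _ (ih (by omega)) (repBy_affRefl n (I t) (J t) (hne t))
  -- the displacement vectors
  set v : ℕ → ZMod n → ℚ := fun t x => ((w t ((x.val : ℤ)) - (x.val : ℤ) : ℤ) : ℚ) with hv
  have hv0 : v 0 = 0 := by
    funext x; simp only [hv, hw0, id_eq, sub_self, Int.cast_zero, Pi.zero_apply]
  have hvstep : ∀ t, t < m → ∃ c : ℚ, v (t+1) = v t + c • dvec A B t := by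
    intro t ht
    refine ⟨((((w t ((((J t : ℤ) : ZMod n)).val : ℤ)) - ((((J t : ℤ) : ZMod n)).val : ℤ) : ℤ) : ℚ)
      - (((w t ((((I t : ℤ) : ZMod n)).val : ℤ)) - ((((I t : ℤ) : ZMod n)).val : ℤ) : ℤ) : ℚ))
      + ((J t - I t : ℤ) : ℚ), ?_⟩
    have h1 : v (t+1) = (fun x : ZMod n =>
        ((w t (affRefl n (I t) (J t) ((x.val : ℤ))) - (x.val : ℤ) : ℤ) : ℚ)) := by
      funext x
      simp only [hv]
      rw [hws t ht]
      rfl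
    rw [h1, vstep n (I t) (J t) (hne t) (w t) (heq t (le_of_lt ht))]
    rfl
  have hvmem : ∀ t, t ≤ m → v t ∈ Vspan A B t := by
    intro t
    induction t with
    | zero => intro _; rw [hv0]; exact zero_mem _
    | succ t ih =>
      intro ht
      obtain ⟨c, hc⟩ := hvstep t (by omega)
      rw [hc]
      exact Submodule.add_mem _ (Vspan_mono A B (Nat.le_succ t) (ih (by omega)))
        (Submodule.smul_mem _ _ (dvec_mem_Vspan A B (Nat.lt_succ_self t)))
  -- value of v at time m
  have hvm : ∀ u : ZMod n, v m u = (n:ℚ) + (if u = 0 then -(n:ℚ)^2 else 0) := by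
    intro u
    have hval : v m u = ((lam n ((u.val : ℤ)) - (u.val : ℤ) : ℤ) : ℚ) := by
      simp only [hv, hwm]
    rcases eq_or_ne u 0 with rfl | hu
    · rw [hval, if_pos rfl]
      rw [show ((0 : ZMod n).val : ℤ) = 0 from by rw [ZMod.val_zero]; rfl]
      unfold lam
      rw [if_pos (Int.zero_emod _)]
      push_cast
      ring
    · rw [hval, if_neg hu]
      have h1 : 0 < u.val := ZMod.val_pos.2 hu
      have h2 : u.val < n := ZMod.val_lt u
      have h3 : ((u.val : ℤ)) % (n:ℤ) = (u.val : ℤ) := by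
        apply Int.emod_eq_of_lt (by positivity)
        exact_mod_cast h2
      unfold lam
      rw [if_neg (by omega)]
      push_cast
      ring
  -- connectivity
  have hconn : ∀ x : ZMod n, Reach A B m x 0 := by
    set y : ZMod n → ℚ := fun u => if Reach A B m u 0 then 1 else 0 with hy
    have hy_step : ∀ s, s < m → y (A s) = y (B s) := by
      intro s hs
      have hr : Reach A B m (A s) (B s) :=
        Relation.EqvGen.rel _ _ ⟨s, hs, Or.inl ⟨rfl, rfl⟩⟩
      simp only [hy]
      by_cases h : Reach A B m (A s) 0
      · rw [if_pos h, if_pos (reach_trans A B (reach_symm A B hr) h)]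
      · rw [if_neg h, if_neg (fun h' => h (reach_trans A B hr h'))]
    have hkill : ∀ z, z ∈ Vspan A B m → ∑ u : ZMod n, y u * z u = 0 := by
      intro z hz
      induction hz using Submodule.span_induction with
      | mem x hx =>
        obtain ⟨s, hs, rfl⟩ := hx
        have e0 : ∑ u : ZMod n, y u * dvec A B s u
            = (∑ u : ZMod n, if u = A s then y u else 0)
              - (∑ u : ZMod n, if u = B s then y u else 0) := by
          rw [← Finset.sum_sub_distrib]
          apply Finset.sum_congr rfl
          intro u _
          simp only [dvec, Pi.sub_apply, sing]
          split_ifs <;> ring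
        rw [e0, Finset.sum_ite_eq' Finset.univ (A s) y, Finset.sum_ite_eq' Finset.univ (B s) y]
        simp only [Finset.mem_univ, if_true]
        rw [hy_step s hs]
        ring
      | zero => simp
      | add x x' hx hx' ihx ihx' =>
        have : ∑ u : ZMod n, y u * (x + x') u
            = (∑ u : ZMod n, y u * x u) + (∑ u : ZMod n, y u * x' u) := by
          rw [← Finset.sum_add_distrib]
          apply Finset.sum_congr rfl
          intro u _
          simp only [Pi.add_apply]
          ring
        rw [this, ihx, ihx', add_zero]
      | smul a x hx ihx =>
        have : ∑ u : ZMod n, y u * (a • x) u = a * ∑ u : ZMod n, y u * x u := by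
          rw [Finset.mul_sum]
          apply Finset.sum_congr rfl
          intro u _
          simp only [Pi.smul_apply, smul_eq_mul]
          ring
        rw [this, ihx, mul_zero]
    have hsum0 : ∑ u : ZMod n, y u * v m u = 0 := hkill _ (hvmem m le_rfl)
    have hsum1 : ∑ u : ZMod n, y u * v m u
        = (n:ℚ) * (∑ u : ZMod n, y u) - (n:ℚ)^2 * y 0 := by
      have e1 : ∀ u : ZMod n, y u * v m u
          = (n:ℚ) * y u + (if u = 0 then -(n:ℚ)^2 * y u else 0) := by
        intro u
        rw [hvm u]
        split_ifs <;> ring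
      rw [Finset.sum_congr rfl (fun u _ => e1 u), Finset.sum_add_distrib, ← Finset.mul_sum]
      have e2 : ∑ u : ZMod n, (if u = 0 then -(n:ℚ)^2 * y u else 0) = -(n:ℚ)^2 * y 0 := by
        rw [Finset.sum_ite_eq' Finset.univ (0 : ZMod n) (fun u => -(n:ℚ)^2 * y u)]
        simp
      rw [e2]
      ring
    have hy0 : y 0 = 1 := by
      simp only [hy]
      exact if_pos (Relation.EqvGen.refl 0)
    have hcard : ∑ u : ZMod n, y u
        = ((Finset.univ.filter (fun u : ZMod n => Reach A B m u 0)).card : ℚ) := by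
      simp only [hy]
      exact Finset.sum_boole _ _
    have hn0 : (n:ℚ) ≠ 0 := by positivity
    have hcards : ((Finset.univ.filter (fun u : ZMod n => Reach A B m u 0)).card : ℚ) = n := by
      rw [hy0, hsum0] at hsum1
      have h4 : (n:ℚ) * ((Finset.univ.filter (fun u : ZMod n => Reach A B m u 0)).card : ℚ)
          = (n:ℚ) * (n:ℚ) := by nlinarith [hsum1]
      exact mul_left_cancel₀ hn0 h4
    have huniv : Finset.univ.filter (fun u : ZMod n => Reach A B m u 0) = Finset.univ := by
      apply (Finset.card_eq_iff_eq_univ _).1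
      rw [ZMod.card]
      exact_mod_cast hcards
    intro x
    have hx : x ∈ Finset.univ.filter (fun u : ZMod n => Reach A B m u 0) := by
      rw [huniv]; exact Finset.mem_univ x
    exact (Finset.mem_filter.1 hx).2
  -- rank of Vspan m is at least n - 1
  have hsup : (⊤ : Submodule ℚ (ZMod n → ℚ))
      = Vspan A B m ⊔ Submodule.span ℚ {sing n 0} := by
    rw [eq_comm, Submodule.eq_top_iff']
    intro z
    have hmemu : ∀ u : ZMod n,
        sing n u ∈ Vspan A B m ⊔ Submodule.span ℚ {sing n 0} := by
      intro u
      have e : sing n u = (sing n u - sing n 0) + sing n 0 := by ring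
      rw [e]
      exact Submodule.add_mem_sup (reach_dvec A B (hconn u))
        (Submodule.mem_span_singleton_self _)
    have hz : z = ∑ u : ZMod n, z u • sing n u := by
      funext x
      simp only [Finset.sum_apply, Pi.smul_apply, sing, smul_eq_mul, mul_ite, mul_one, mul_zero]
      rw [Finset.sum_ite_eq Finset.univ x z]
      simp
    rw [hz]
    exact Submodule.sum_mem _ (fun u _ => Submodule.smul_mem _ _ (hmemu u))
  have hrankVm : n - 1 ≤ finrank ℚ (Vspan A B m) := by
    have h1 : finrank ℚ (⊤ : Submodule ℚ (ZMod n → ℚ)) = n := by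
      rw [finrank_top, Module.finrank_fintype_fun_eq_card, ZMod.card]
    have h2 := Submodule.finrank_sup_add_finrank_inf_eq (Vspan A B m)
      (Submodule.span ℚ {sing n 0})
    have h3 : finrank ℚ (Submodule.span ℚ {sing n 0}) = 1 := by
      apply finrank_span_singleton
      intro h
      have := congrFun h 0
      simp [sing] at this
    rw [← hsup, h1, h3] at h2
    omega
  -- counting independent steps
  set P : ℕ → Prop := fun s => dvec A B s ∉ Vspan A B s with hP
  have hcnt : ∀ t, finrank ℚ (Vspan A B t) ≤ ((Finset.range t).filter P).card := by
    intro t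
    induction t with
    | zero =>
      have hV0 : Vspan A B 0 = ⊥ := by
        unfold Vspan
        rw [show {s : ℕ | s < 0} = (∅ : Set ℕ) from by ext s; simp]
        rw [Set.image_empty, Submodule.span_empty]
      rw [hV0]
      simp
    | succ t ih =>
      by_cases hd : dvec A B t ∈ Vspan A B t
      · have hV : Vspan A B (t+1) = Vspan A B t := by
          rw [Vspan_succ]
          exact sup_eq_left.2 ((Submodule.span_singleton_le_iff_mem _ _).2 hd)
        rw [hV]
        refine le_trans ih (Finset.card_le_card (Finset.filter_subset_filter _ ?_))
        intro x hx
        simp only [Finset.mem_range] at hx ⊢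
        omega
      · have hV : finrank ℚ (Vspan A B (t+1)) ≤ finrank ℚ (Vspan A B t) + 1 := by
          have h2 := Submodule.finrank_sup_add_finrank_inf_eq (Vspan A B t)
            (Submodule.span ℚ {dvec A B t})
          have h3 : finrank ℚ (Submodule.span ℚ {dvec A B t}) = 1 :=
            finrank_span_singleton (sing_sub_ne_zero n _ _ (hab t))
          rw [Vspan_succ]
          omega
        have hfil : ((Finset.range (t+1)).filter P).card
            = ((Finset.range t).filter P).card + 1 := by
          rw [Finset.range_add_one, Finset.filter_insert, if_pos hd,
            Finset.card_insert_of_notMem (by simp)]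
        omega
  have hUcard : n - 1 ≤ ((Finset.range m).filter P).card :=
    le_trans hrankVm (hcnt m)
  -- sigma m is the identity
  have hσm : sigmaPerm A B m = 1 := by
    apply Equiv.ext
    intro x
    have h1 := hrep m le_rfl ((x.val : ℤ))
    rw [hwm, lam_rep, val_intCast] at h1
    rw [← h1]
    rfl
  have hg0 : rho n (sigmaPerm A B 0) = 0 := by rw [sigmaPerm_zero]; exact rho_one n
  have hgm : rho n (sigmaPerm A B m) = 0 := by rw [hσm]; exact rho_one n
  -- exact rank increase at independent steps
  have hup : ∀ t, t < m → P t →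
      rho n (sigmaPerm A B (t+1)) = rho n (sigmaPerm A B t) + 1 := by
    intro t htm hPt
    rw [sigmaPerm_succ]
    set x0 : ZMod n → ℚ := fun u => if Reach A B t u (A t) then (1:ℚ) else 0 with hx0
    apply rank_step n (sigmaPerm A B t) (A t) (B t) (hab t) (Vspan A B t)
      (range_AA_sigma_le A B hab t) hPt x0
    · apply sigma_fix
      intro s hs
      have hr : Reach A B t (A s) (B s) :=
        Relation.EqvGen.rel _ _ ⟨s, hs, Or.inl ⟨rfl, rfl⟩⟩
      simp only [hx0]
      by_cases h : Reach A B t (A s) (A t)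
      · rw [if_pos h, if_pos (reach_trans A B (reach_symm A B hr) h)]
      · rw [if_neg h, if_neg (fun h' => h (reach_trans A B hr h'))]
    · simp only [hx0]
      exact if_pos (Relation.EqvGen.refl _)
    · simp only [hx0]
      rw [if_neg]
      intro h
      exact hPt (reach_dvec A B (reach_symm A B h))
  have hdown : ∀ t, t < m →
      rho n (sigmaPerm A B t) ≤ rho n (sigmaPerm A B (t+1)) + 1 := by
    intro t htm
    rw [sigmaPerm_succ]
    exact rho_swap_mul_ge n _ _ _ (hab t)
  -- telescoping
  have htel : ∑ t ∈ Finset.range m,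
      ((rho n (sigmaPerm A B (t+1)) : ℤ) - (rho n (sigmaPerm A B t) : ℤ)) = 0 := by
    rw [Finset.sum_range_sub (fun t => (rho n (sigmaPerm A B t) : ℤ))]
    rw [hg0, hgm]
    simp
  have hsplit := Finset.sum_filter_add_sum_filter_not (Finset.range m) P
    (fun t => ((rho n (sigmaPerm A B (t+1)) : ℤ) - (rho n (sigmaPerm A B t) : ℤ)))
  have hAone : ∑ t ∈ (Finset.range m).filter P,
      ((rho n (sigmaPerm A B (t+1)) : ℤ) - (rho n (sigmaPerm A B t) : ℤ))
      = (((Finset.range m).filter P).card : ℤ) := by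
    rw [Finset.sum_congr rfl (fun t ht => ?_), Finset.sum_const, nsmul_eq_mul, mul_one]
    have htm : t < m := Finset.mem_range.1 (Finset.mem_of_mem_filter t ht)
    have hPt : P t := (Finset.mem_filter.1 ht).2
    rw [hup t htm hPt]
    push_cast
    ring
  have hBneg : -((((Finset.range m).filter (fun t => ¬ P t)).card : ℤ))
      ≤ ∑ t ∈ (Finset.range m).filter (fun t => ¬ P t),
        ((rho n (sigmaPerm A B (t+1)) : ℤ) - (rho n (sigmaPerm A B t) : ℤ)) := by
    have := Finset.sum_le_sum (s := (Finset.range m).filter (fun t => ¬ P t))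
      (f := fun _ => (-1 : ℤ))
      (g := fun t => ((rho n (sigmaPerm A B (t+1)) : ℤ) - (rho n (sigmaPerm A B t) : ℤ)))
      (fun t ht => by
        have htm : t < m := Finset.mem_range.1 (Finset.mem_of_mem_filter t ht)
        have := hdown t htm
        push_cast
        omega)
    rw [Finset.sum_const, nsmul_eq_mul, mul_neg_one] at this
    exact this
  have hcards := Finset.card_filter_add_card_filter_not (s := Finset.range m) P
  rw [Finset.card_range] at hcards
  -- combine
  have hfin : (((Finset.range m).filter P).card : ℤ)
      ≤ (((Finset.range m).filter (fun t => ¬ P t)).card : ℤ) := by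
    rw [hAone] at hsplit
    omega
  have hfin' : ((Finset.range m).filter P).card
      ≤ ((Finset.range m).filter (fun t => ¬ P t)).card := by exact_mod_cast hfin
  omega

end MainLower

/-- For every integer `n ≥ 2`, the reflection length of `λₙ` equals `2n-2`:
`λₙ` is a product of `2n-2` affine reflections and of no fewer. -/
theorem stmt0 (n : ℕ) (hn : 2 ≤ n) :
    (∃ l : List (ℤ → ℤ), (∀ t ∈ l, IsAffRefl n t) ∧ l.length = 2 * n - 2 ∧
      listProd l = lam n) ∧
    (∀ l : List (ℤ → ℤ), (∀ t ∈ l, IsAffRefl n t) → listProd l = lam n →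
      2 * n - 2 ≤ l.length) := by
  constructor
  · exact upper_bound n hn
  · intro l hrefl hprod
    have hex : ∀ s : Fin l.length, ∃ i : ℤ, ∃ j : ℤ,
        (i - j) % (n:ℤ) ≠ 0 ∧ l.get s = affRefl n i j :=
      fun s => hrefl _ (l.get_mem s)
    set I : ℕ → ℤ := fun s =>
      if h : s < l.length then (hex ⟨s, h⟩).choose else 0 with hI
    set J : ℕ → ℤ := fun s =>
      if h : s < l.length then (hex ⟨s, h⟩).choose_spec.choose else 1 with hJ
    have hne : ∀ s : ℕ, (I s - J s) % (n:ℤ) ≠ 0 := by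
      intro s
      by_cases h : s < l.length
      · simp only [hI, hJ, dif_pos h]
        exact (hex ⟨s, h⟩).choose_spec.choose_spec.1
      · simp only [hI, hJ, dif_neg h]
        intro hc
        have hd : (n:ℤ) ∣ (0 - 1) := Int.dvd_of_emod_eq_zero hc
        rw [zero_sub, dvd_neg] at hd
        have := Int.le_of_dvd (by norm_num) hd
        omega
    have hget : ∀ s (h : s < l.length), l.get ⟨s, h⟩ = affRefl n (I s) (J s) := by
      intro s h
      simp only [hI, hJ, dif_pos h]
      exact (hex ⟨s, h⟩).choose_spec.choose_spec.2
    set w : ℕ → ℤ → ℤ := fun t => listProd (l.take t) with hw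
    have hw0 : w 0 = id := rfl
    have hws : ∀ t, t < l.length → w (t+1) = w t ∘ affRefl n (I t) (J t) := by
      intro t ht
      simp only [hw]
      rw [List.take_succ, listProd_append, List.getElem?_eq_getElem ht]
      have e1 : listProd (some l[t]).toList = l.get ⟨t, ht⟩ := by
        simp only [Option.toList_some, listProd, List.foldr_cons, List.foldr_nil,
          List.get_eq_getElem]
        exact Function.comp_id _
      rw [e1, hget t ht]
    have hwm : w l.length = lam n := by
      simp only [hw, List.take_length]
      exact hprod
    exact lower_aux n hn l.length I J w hne hw0 hws hwm
end

section
/- Let n ≥ 2 and let r = [r_1, …, r_{2n−2}] be a factorization of λ_n into 2n−2 affine reflections. Then r is tree-like if and only if there exist integers a_0, a_1, …, a_{2n−2} such that r_ℓ = ((a_{ℓ−1}, a_ℓ)) and |a_ℓ − a_{ℓ−1}| < n for each ℓ = 1, …, 2n−2. -/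
section Stmt2Aux

open Finset

private lemma st2_emod_comm {n i j : ℤ} (h : (i - j) % n = 0) : (j - i) % n = 0 := by
  have := Int.dvd_of_emod_eq_zero h
  exact Int.emod_eq_zero_of_dvd (by rw [show j - i = -(i - j) by ring]; exact dvd_neg.mpr this)

private lemma st2_emod_trans {n x i j : ℤ} (hx : (x - i) % n = 0) (hj : (x - j) % n = 0) :
    (i - j) % n = 0 := by
  have h1 := Int.dvd_of_emod_eq_zero hx
  have h2 := Int.dvd_of_emod_eq_zero hj
  exact Int.emod_eq_zero_of_dvd (by
    have := dvd_sub h2 h1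
    simpa [show x - j - (x - i) = i - j by ring] using this)

lemma st2_affRefl_left {n : ℕ} {i j x : ℤ} (h : (x - i) % (n:ℤ) = 0) :
    affRefl n i j x = x - i + j := by
  unfold affRefl; rw [if_pos h]

lemma st2_affRefl_right {n : ℕ} {i j x : ℤ} (hij : (i - j) % (n:ℤ) ≠ 0)
    (h : (x - j) % (n:ℤ) = 0) : affRefl n i j x = x - j + i := by
  have h1 : (x - i) % (n:ℤ) ≠ 0 := fun hx => hij (st2_emod_trans hx h)
  unfold affRefl; rw [if_neg h1, if_pos h]

lemma st2_affRefl_other {n : ℕ} {i j x : ℤ} (h1 : (x - i) % (n:ℤ) ≠ 0)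
    (h2 : (x - j) % (n:ℤ) ≠ 0) : affRefl n i j x = x := by
  unfold affRefl; rw [if_neg h1, if_neg h2]

lemma st2_affRefl_shift {n : ℕ} (i j c : ℤ) :
    affRefl n (i + c * n) (j + c * n) = affRefl n i j := by
  funext x
  have e1 : (x - (i + c * n)) % (n:ℤ) = (x - i) % (n:ℤ) := by
    rw [show x - (i + c * (n:ℤ)) = (x - i) + (n:ℤ) * (-c) by ring, Int.add_mul_emod_self_left]
  have e2 : (x - (j + c * n)) % (n:ℤ) = (x - j) % (n:ℤ) := by
    rw [show x - (j + c * (n:ℤ)) = (x - j) + (n:ℤ) * (-c) by ring, Int.add_mul_emod_self_left]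
  unfold affRefl
  rw [e1, e2]; split_ifs <;> ring

lemma st2_affRefl_symm {n : ℕ} {i j : ℤ} (hij : (i - j) % (n:ℤ) ≠ 0) :
    affRefl n i j = affRefl n j i := by
  have hji : (j - i) % (n:ℤ) ≠ 0 := fun h => hij (st2_emod_comm h)
  funext x
  by_cases h1 : (x - i) % (n:ℤ) = 0
  · rw [st2_affRefl_left h1, st2_affRefl_right hji h1]
  · by_cases h2 : (x - j) % (n:ℤ) = 0
    · rw [st2_affRefl_right hij h2, st2_affRefl_left h2]
    · rw [st2_affRefl_other h1 h2, st2_affRefl_other h2 h1]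

lemma st2_affRefl_equiv {n : ℕ} (i j x c : ℤ) :
    affRefl n i j (x + c * n) = affRefl n i j x + c * n := by
  have e1 : (x + c * (n:ℤ) - i) % (n:ℤ) = (x - i) % (n:ℤ) := by
    rw [show x + c * (n:ℤ) - i = (x - i) + (n:ℤ) * c by ring, Int.add_mul_emod_self_left]
  have e2 : (x + c * (n:ℤ) - j) % (n:ℤ) = (x - j) % (n:ℤ) := by
    rw [show x + c * (n:ℤ) - j = (x - j) + (n:ℤ) * c by ring, Int.add_mul_emod_self_left]
  unfold affRefl
  rw [e1, e2]; split_ifs <;> ring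

lemma st2_affRefl_invol {n : ℕ} {i j : ℤ} (hij : (i - j) % (n:ℤ) ≠ 0) (x : ℤ) :
    affRefl n i j (affRefl n i j x) = x := by
  by_cases h1 : (x - i) % (n:ℤ) = 0
  · rw [st2_affRefl_left h1]
    have : (x - i + j - j) % (n:ℤ) = 0 := by simpa using h1
    rw [st2_affRefl_right hij this]; ring
  · by_cases h2 : (x - j) % (n:ℤ) = 0
    · rw [st2_affRefl_right hij h2]
      have : (x - j + i - i) % (n:ℤ) = 0 := by simpa using h2
      rw [st2_affRefl_left this]; ring
    · rw [st2_affRefl_other h1 h2, st2_affRefl_other h1 h2]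

/-- If `affRefl n i j = affRefl n p q` with `i ≢ j`, then `p ≢ q`. -/
lemma st2_affRefl_incong {n : ℕ} {i j p q : ℤ} (hij : (i - j) % (n:ℤ) ≠ 0)
    (h : affRefl n i j = affRefl n p q) : (p - q) % (n:ℤ) ≠ 0 := by
  intro hpq
  have hfp : affRefl n i j p = q := by
    rw [h, st2_affRefl_left (by simp)]; ring
  by_cases h1 : (p - i) % (n:ℤ) = 0
  · rw [st2_affRefl_left h1] at hfp
    apply hij
    have : (p - q) = (i - j) := by omega
    rwa [this] at hpq
  · by_cases h2 : (p - j) % (n:ℤ) = 0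
    · rw [st2_affRefl_right hij h2] at hfp
      apply hij
      apply st2_emod_comm
      have : (p - q) = (j - i) := by omega
      rwa [this] at hpq
    · rw [st2_affRefl_other h1 h2] at hfp
      -- p = q, so affRefl n p q = id, so i = j
      subst hfp
      have hid : affRefl n p p = id := by
        funext x
        by_cases hx : (x - p) % (n:ℤ) = 0
        · rw [st2_affRefl_left hx]; simp
        · rw [st2_affRefl_other hx hx]; rfl
      rw [hid] at h
      have : affRefl n i j i = i := by rw [h]; rfl
      rw [st2_affRefl_left (by simp)] at this
      apply hij
      have : i - j = 0 := by omega
      simp [this]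

end Stmt2Aux
section Stmt2Aux2

open Finset

lemma st2_listProd_nil : listProd [] = id := rfl

lemma st2_listProd_cons (t : ℤ → ℤ) (L : List (ℤ → ℤ)) :
    listProd (t :: L) = t ∘ listProd L := rfl

lemma st2_listProd_equiv {n : ℕ} {L : List (ℤ → ℤ)} (hL : ∀ t ∈ L, IsAffRefl n t)
    (x c : ℤ) : listProd L (x + c * n) = listProd L x + c * n := by
  induction L with
  | nil => rfl
  | cons t L ih =>
    obtain ⟨i, j, hij, ht⟩ := hL t (by simp)
    have ih' := ih (fun t ht => hL t (by simp [ht]))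
    rw [st2_listProd_cons]
    simp only [Function.comp_apply, ih', ht, st2_affRefl_equiv]

lemma st2_listProd_inj {n : ℕ} {L : List (ℤ → ℤ)} (hL : ∀ t ∈ L, IsAffRefl n t) :
    Function.Injective (listProd L) := by
  induction L with
  | nil => exact fun x y h => h
  | cons t L ih =>
    obtain ⟨i, j, hij, ht⟩ := hL t (by simp)
    have ih' := ih (fun t ht => hL t (by simp [ht]))
    have htinj : Function.Injective t := by
      rw [ht]
      exact Function.LeftInverse.injective (st2_affRefl_invol hij)
    exact fun x y h => ih' (htinj h)

lemma st2_listProd_emod_inj {n : ℕ} {L : List (ℤ → ℤ)} (hL : ∀ t ∈ L, IsAffRefl n t)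
    {x y : ℤ} (h : (listProd L x - listProd L y) % (n:ℤ) = 0) : (x - y) % (n:ℤ) = 0 := by
  obtain ⟨c, hc⟩ := Int.dvd_of_emod_eq_zero h
  have : listProd L x = listProd L (y + c * n) := by
    rw [st2_listProd_equiv hL]; rw [mul_comm] at hc; omega
  have hxy := st2_listProd_inj hL this
  apply Int.emod_eq_zero_of_dvd
  exact ⟨c, by rw [mul_comm] at hc ⊢; omega⟩

lemma st2_suffixProd_succ {l : List (ℤ → ℤ)} {k : ℕ} (h : k < l.length) :
    suffixProd l k = l.get ⟨k, h⟩ ∘ suffixProd l (k + 1) := by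
  unfold suffixProd
  rw [List.drop_eq_getElem_cons h, st2_listProd_cons]
  rfl

lemma st2_suffixProd_length (l : List (ℤ → ℤ)) : suffixProd l l.length = id := by
  unfold suffixProd
  rw [List.drop_length]
  rfl

lemma st2_suffixProd_zero (l : List (ℤ → ℤ)) : suffixProd l 0 = listProd l := rfl

lemma st2_suffixProd_mem {l : List (ℤ → ℤ)} {k : ℕ} {n : ℕ}
    (hfact : ∀ t ∈ l, IsAffRefl n t) : ∀ t ∈ l.drop k, IsAffRefl n t :=
  fun t ht => hfact t (List.drop_subset k l ht)

lemma st2_suffixProd_equiv {n : ℕ} {l : List (ℤ → ℤ)} (hf : ∀ t ∈ l, IsAffRefl n t)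
    (k : ℕ) (x c : ℤ) : suffixProd l k (x + c * n) = suffixProd l k x + c * n :=
  st2_listProd_equiv (st2_suffixProd_mem hf) x c

lemma st2_suffixProd_emod_inj {n : ℕ} {l : List (ℤ → ℤ)} (hf : ∀ t ∈ l, IsAffRefl n t)
    {k : ℕ} {x y : ℤ} (h : (suffixProd l k x - suffixProd l k y) % (n:ℤ) = 0) :
    (x - y) % (n:ℤ) = 0 :=
  st2_listProd_emod_inj (st2_suffixProd_mem hf) h

/-- chain endpoints are incongruent -/
lemma st2_chain_incong {n : ℕ} {l : List (ℤ → ℤ)} (hf : ∀ t ∈ l, IsAffRefl n t)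
    {a : ℕ → ℤ} (hchain : ∀ k : ℕ, ∀ h : k < l.length, l.get ⟨k, h⟩ = affRefl n (a k) (a (k + 1)))
    {k : ℕ} (h : k < l.length) : (a k - a (k + 1)) % (n:ℤ) ≠ 0 := by
  obtain ⟨i, j, hij, ht⟩ := hf (l.get ⟨k, h⟩) (l.get_mem _)
  exact st2_affRefl_incong hij (by rw [← ht, hchain k h])

/-- trajectory of the chain -/
lemma st2_chain_traj {n : ℕ} {l : List (ℤ → ℤ)} (hf : ∀ t ∈ l, IsAffRefl n t)
    {a : ℕ → ℤ} (hchain : ∀ k : ℕ, ∀ h : k < l.length, l.get ⟨k, h⟩ = affRefl n (a k) (a (k + 1))) :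
    ∀ k, k ≤ l.length → suffixProd l k (a l.length) = a k := by
  have step : ∀ k, ∀ h : k < l.length,
      suffixProd l (k + 1) (a l.length) = a (k + 1) →
      suffixProd l k (a l.length) = a k := by
    intro k h ih
    rw [st2_suffixProd_succ h]
    simp only [Function.comp_apply, ih, hchain k h]
    rw [st2_affRefl_right (st2_chain_incong hf hchain h) (by simp)]
    ring
  have H : ∀ d, d ≤ l.length → suffixProd l (l.length - d) (a l.length) = a (l.length - d) := by
    intro d
    induction d with
    | zero => intro _; simpa using congrFun (st2_suffixProd_length l) (a l.length)
    | succ d ih =>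
      intro hd
      have h1 : l.length - (d + 1) < l.length := by omega
      have h2 : l.length - (d + 1) + 1 = l.length - d := by omega
      apply step _ h1
      rw [h2]
      exact ih (by omega)
  intro k hk
  have := H (l.length - k) (by omega)
  rwa [show l.length - (l.length - k) = k by omega] at this

end Stmt2Aux2
section Stmt2Aux3

open Finset

/-- trichotomy for a single step of a trajectory -/
lemma st2_mu_cases {n : ℕ} {l : List (ℤ → ℤ)} (hf : ∀ t ∈ l, IsAffRefl n t)
    {a : ℕ → ℤ} (hchain : ∀ k : ℕ, ∀ h : k < l.length, l.get ⟨k, h⟩ = affRefl n (a k) (a (k + 1)))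
    {k : ℕ} (h : k < l.length) (x : ℤ) :
    ((suffixProd l (k+1) x - a k) % (n:ℤ) = 0 ∧
      suffixProd l k x - suffixProd l (k+1) x = a (k+1) - a k) ∨
    ((suffixProd l (k+1) x - a (k+1)) % (n:ℤ) = 0 ∧
      suffixProd l k x - suffixProd l (k+1) x = -(a (k+1) - a k)) ∨
    ((suffixProd l (k+1) x - a k) % (n:ℤ) ≠ 0 ∧ (suffixProd l (k+1) x - a (k+1)) % (n:ℤ) ≠ 0 ∧
      suffixProd l k x - suffixProd l (k+1) x = 0) := by
  have hkk := st2_chain_incong hf hchain h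
  have hP : suffixProd l k x = affRefl n (a k) (a (k+1)) (suffixProd l (k+1) x) := by
    rw [st2_suffixProd_succ h, ← hchain k h]; rfl
  set y := suffixProd l (k+1) x with hy
  by_cases h1 : (y - a k) % (n:ℤ) = 0
  · left; exact ⟨h1, by rw [hP, st2_affRefl_left h1]; ring⟩
  · by_cases h2 : (y - a (k+1)) % (n:ℤ) = 0
    · right; left; exact ⟨h2, by rw [hP, st2_affRefl_right hkk h2]; ring⟩
    · right; right; exact ⟨h1, h2, by rw [hP, st2_affRefl_other h1 h2]; ring⟩

lemma st2_lam_zero {n : ℕ} {x : ℤ} (h : x % (n:ℤ) = 0) :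
    lam n x = x - (n:ℤ) * ((n:ℤ) - 1) := by unfold lam; rw [if_pos h]

lemma st2_lam_ne {n : ℕ} {x : ℤ} (h : x % (n:ℤ) ≠ 0) : lam n x = x + (n:ℤ) := by
  unfold lam; rw [if_neg h]

lemma st2_mem_Icc_mod {n : ℕ} (hn : 2 ≤ n) {x : ℤ} (hx : x ∈ Finset.Icc (1:ℤ) (n:ℤ)) :
    (x % (n:ℤ) = 0) ↔ x = (n:ℤ) := by
  rw [Finset.mem_Icc] at hx
  constructor
  · intro h
    by_contra hne
    rw [Int.emod_eq_of_lt (by omega) (by omega)] at h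
    omega
  · intro h; rw [h]; simp

/-- representatives with congruent values are equal -/
lemma st2_rep_eq {n : ℕ} {x y : ℤ} (hx : x ∈ Finset.Icc (1:ℤ) (n:ℤ))
    (hy : y ∈ Finset.Icc (1:ℤ) (n:ℤ)) (h : (x - y) % (n:ℤ) = 0) : x = y := by
  rw [Finset.mem_Icc] at hx hy
  obtain ⟨c, hc⟩ := Int.dvd_of_emod_eq_zero h
  by_contra hne
  have hc0 : c ≠ 0 := by rintro rfl; simp at hc; omega
  have h1 : (1:ℤ) ≤ |c| := Int.one_le_abs (by exact_mod_cast hc0)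
  have h2 : |x - y| = (n:ℤ) * |c| := by rw [hc, abs_mul, abs_of_nonneg (by positivity)]
  have h3 : (n:ℤ) * 1 ≤ (n:ℤ) * |c| := by
    apply mul_le_mul_of_nonneg_left h1 (by positivity)
  have h4 : |x - y| < n := by rw [abs_lt]; omega
  omega

/-- sum of |net displacements| over representatives -/
lemma st2_sum_net {n : ℕ} (hn : 2 ≤ n) :
    ∑ x ∈ Finset.Icc (1:ℤ) (n:ℤ), |lam n x - x| = 2 * ((n:ℤ) * ((n:ℤ) - 1)) := by
  have hsplit : Finset.Icc (1:ℤ) (n:ℤ) = insert (n:ℤ) (Finset.Icc (1:ℤ) ((n:ℤ) - 1)) := by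
    ext x; simp only [Finset.mem_Icc, Finset.mem_insert]; omega
  rw [hsplit, Finset.sum_insert (by simp)]
  have h1 : |lam n (n:ℤ) - (n:ℤ)| = (n:ℤ) * ((n:ℤ) - 1) := by
    rw [st2_lam_zero (by simp)]
    rw [show (n:ℤ) - (n:ℤ) * ((n:ℤ) - 1) - (n:ℤ) = -((n:ℤ) * ((n:ℤ) - 1)) by ring, abs_neg]
    apply abs_of_nonneg
    have : (2:ℤ) ≤ (n:ℤ) := by exact_mod_cast hn
    nlinarith
  have h2 : ∀ x ∈ Finset.Icc (1:ℤ) ((n:ℤ) - 1), |lam n x - x| = (n:ℤ) := by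
    intro x hx
    rw [Finset.mem_Icc] at hx
    rw [st2_lam_ne (by rw [Int.emod_eq_of_lt (by omega) (by omega)]; omega)]
    rw [show x + (n:ℤ) - x = (n:ℤ) by ring]
    exact abs_of_nonneg (by positivity)
  rw [Finset.sum_congr rfl h2, Finset.sum_const, Int.card_Icc]
  rw [nsmul_eq_mul, h1]
  have : ((((n:ℤ) - 1) + 1 - 1).toNat : ℤ) = (n:ℤ) - 1 := by
    rw [Int.toNat_of_nonneg (by omega)]; ring
  rw [this]; ring

/-- net displacement as telescoping sum of moves -/
lemma st2_net_telescope {n : ℕ} {l : List (ℤ → ℤ)} (hprod : listProd l = lam n) (x : ℤ) :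
    lam n x - x = ∑ k ∈ Finset.range l.length,
      (suffixProd l k x - suffixProd l (k+1) x) := by
  rw [Finset.sum_range_sub' (fun k => suffixProd l k x)]
  rw [st2_suffixProd_zero, hprod, st2_suffixProd_length]
  rfl

/-- at most two representatives move at any step -/
lemma st2_movers_card {n : ℕ} (hn : 2 ≤ n) {l : List (ℤ → ℤ)}
    (hf : ∀ t ∈ l, IsAffRefl n t) {a : ℕ → ℤ}
    (hchain : ∀ k : ℕ, ∀ h : k < l.length, l.get ⟨k, h⟩ = affRefl n (a k) (a (k + 1)))
    {k : ℕ} (h : k < l.length) :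
    ((Finset.Icc (1:ℤ) (n:ℤ)).filter
      (fun x => suffixProd l k x - suffixProd l (k+1) x ≠ 0)).card ≤ 2 := by
  classical
  have key : ∀ x ∈ (Finset.Icc (1:ℤ) (n:ℤ)).filter
      (fun x => suffixProd l k x - suffixProd l (k+1) x ≠ 0),
      ((suffixProd l (k+1) x - a k) % (n:ℤ) = 0) ∨
      ((suffixProd l (k+1) x - a (k+1)) % (n:ℤ) = 0) := by
    intro x hx
    rw [Finset.mem_filter] at hx
    rcases st2_mu_cases hf hchain h x with ⟨h1, _⟩ | ⟨h1, _⟩ | ⟨_, _, h3⟩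
    · exact Or.inl h1
    · exact Or.inr h1
    · exact absurd h3 hx.2
  have inj : ∀ (b : ℤ), ∀ x ∈ (Finset.Icc (1:ℤ) (n:ℤ)), ∀ y ∈ (Finset.Icc (1:ℤ) (n:ℤ)),
      (suffixProd l (k+1) x - b) % (n:ℤ) = 0 → (suffixProd l (k+1) y - b) % (n:ℤ) = 0 →
      x = y := by
    intro b x hx y hy h1 h2
    apply st2_rep_eq hx hy
    apply st2_suffixProd_emod_inj hf (k := k+1)
    have : suffixProd l (k+1) x - suffixProd l (k+1) y
        = (suffixProd l (k+1) x - b) - (suffixProd l (k+1) y - b) := by ring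
    rw [this, Int.sub_emod, h1, h2]
    simp
  calc ((Finset.Icc (1:ℤ) (n:ℤ)).filter _).card
      ≤ (Finset.univ : Finset Bool).card := by
        apply Finset.card_le_card_of_injOn
          (fun x => decide ((suffixProd l (k+1) x - a k) % (n:ℤ) = 0))
          (fun _ _ => Finset.mem_univ _)
        intro x hx y hy hxy
        simp only [decide_eq_decide] at hxy
        have hx' := hx; have hy' := hy
        rw [Finset.mem_coe, Finset.mem_filter] at hx' hy'
        by_cases hcx : (suffixProd l (k+1) x - a k) % (n:ℤ) = 0
        · exact inj (a k) x hx'.1 y hy'.1 hcx (hxy.mp hcx)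
        · have hcy : ¬ (suffixProd l (k+1) y - a k) % (n:ℤ) = 0 := fun hc => hcx (hxy.mpr hc)
          have h1 := (key x hx).resolve_left hcx
          have h2 := (key y hy).resolve_left hcy
          exact inj (a (k+1)) x hx'.1 y hy'.1 h1 h2
    _ = 2 := by simp

end Stmt2Aux3
section Stmt2Aux4

open Finset

lemma st2_claim1 {n : ℕ} (hn : 2 ≤ n) {l : List (ℤ → ℤ)} (hfact : IsFactorization n l)
    {a : ℕ → ℤ} (hchain : ∀ k : ℕ, ∀ h : k < l.length, l.get ⟨k, h⟩ = affRefl n (a k) (a (k + 1)))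
    (hinc : ∀ k : ℕ, k < l.length → a k < a (k + 1)) :
    ∀ k : ℕ, k < l.length → a (k + 1) - a k < (n : ℤ) := by
  classical
  obtain ⟨hf, hprod⟩ := hfact
  set m := l.length with hm
  set P : ℕ → ℤ → ℤ := suffixProd l with hP
  set mv : ℤ → ℕ → ℤ := fun x k => P k x - P (k+1) x with hmv
  set g : ℕ → ℤ := fun k => a (k+1) - a k with hgdef
  intro k₀ hk₀
  have hmpos : 0 < m := by omega
  have hg0 : ∀ k, k < m → (g k) % (n:ℤ) ≠ 0 := by
    intro k hk hc
    exact st2_chain_incong hf hchain hk (st2_emod_comm hc)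
  -- λ(a m) = a 0
  have ha0 : lam n (a m) = a 0 := by
    have := st2_chain_traj hf hchain 0 (by omega)
    rw [st2_suffixProd_zero, hprod] at this
    exact this
  have hsumg : ∑ k ∈ range m, g k = a m - a 0 := Finset.sum_range_sub a m
  have htotpos : 0 < a m - a 0 := by
    rw [← hsumg]
    apply Finset.sum_pos
    · intro k hk; rw [mem_range] at hk; have := hinc k hk; simp only [hgdef]; omega
    · exact ⟨0, mem_range.mpr hmpos⟩
  have hclass : (a m) % (n:ℤ) = 0 := by
    by_contra h
    rw [st2_lam_ne h] at ha0
    omega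
  have htot : a m - a 0 = (n:ℤ) * ((n:ℤ) - 1) := by
    rw [st2_lam_zero hclass] at ha0
    omega
  -- net = telescoping sum
  have net_eq : ∀ x : ℤ, lam n x - x = ∑ k ∈ range m, mv x k :=
    fun x => st2_net_telescope hprod x
  -- lower bound per x
  have lower : ∀ x : ℤ, |lam n x - x| ≤ ∑ k ∈ range m, |mv x k| := by
    intro x
    rw [net_eq x]
    exact Finset.abs_sum_le_sum_abs _ _
  -- upper bound per k
  have upper : ∀ k ∈ range m, ∑ x ∈ Finset.Icc (1:ℤ) (n:ℤ), |mv x k| ≤ 2 * g k := by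
    intro k hk
    rw [mem_range] at hk
    have hgk : 0 < g k := by have := hinc k hk; simp only [hgdef]; omega
    have hsub : ∑ x ∈ (Finset.Icc (1:ℤ) (n:ℤ)).filter (fun x => mv x k ≠ 0), |mv x k|
        = ∑ x ∈ Finset.Icc (1:ℤ) (n:ℤ), |mv x k| := by
      apply Finset.sum_filter_of_ne
      intro x _ hne
      intro hc
      rw [hc] at hne; simp at hne
    rw [← hsub]
    calc ∑ x ∈ (Finset.Icc (1:ℤ) (n:ℤ)).filter (fun x => mv x k ≠ 0), |mv x k|
        ≤ ∑ _x ∈ (Finset.Icc (1:ℤ) (n:ℤ)).filter (fun x => mv x k ≠ 0), g k := by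
          apply Finset.sum_le_sum
          intro x _
          rcases st2_mu_cases hf hchain hk x with ⟨_, h2⟩ | ⟨_, h2⟩ | ⟨_, _, h3⟩
          · simp only [hmv]; rw [h2]; rw [abs_of_pos hgk]
          · simp only [hmv]; rw [h2]; rw [abs_neg, abs_of_pos hgk]
          · simp only [hmv]; rw [h3]; simp; omega
      _ = ((Finset.Icc (1:ℤ) (n:ℤ)).filter (fun x => mv x k ≠ 0)).card • g k :=
          (Finset.sum_const _)
      _ ≤ 2 * g k := by
          rw [nsmul_eq_mul]
          apply mul_le_mul_of_nonneg_right _ (le_of_lt hgk)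
          have := st2_movers_card hn hf hchain hk
          exact_mod_cast this
  -- the sandwich
  have sumg2 : ∑ k ∈ range m, 2 * g k = 2 * ((n:ℤ) * ((n:ℤ) - 1)) := by
    rw [← Finset.mul_sum, hsumg, htot]
  have key1 : ∑ x ∈ Finset.Icc (1:ℤ) (n:ℤ), |lam n x - x|
      ≤ ∑ x ∈ Finset.Icc (1:ℤ) (n:ℤ), ∑ k ∈ range m, |mv x k| :=
    Finset.sum_le_sum (fun x _ => lower x)
  have swap : ∑ x ∈ Finset.Icc (1:ℤ) (n:ℤ), ∑ k ∈ range m, |mv x k|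
      = ∑ k ∈ range m, ∑ x ∈ Finset.Icc (1:ℤ) (n:ℤ), |mv x k| := Finset.sum_comm
  have key2 : ∑ k ∈ range m, ∑ x ∈ Finset.Icc (1:ℤ) (n:ℤ), |mv x k|
      ≤ ∑ k ∈ range m, 2 * g k := Finset.sum_le_sum upper
  have hmid : ∑ x ∈ Finset.Icc (1:ℤ) (n:ℤ), ∑ k ∈ range m, |mv x k|
      = 2 * ((n:ℤ) * ((n:ℤ) - 1)) := by
    have hl := st2_sum_net hn (n := n)
    rw [swap]
    have := key1
    rw [hl] at this
    rw [sumg2] at key2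
    rw [swap] at this
    omega
  have E1 : ∀ x ∈ Finset.Icc (1:ℤ) (n:ℤ), |lam n x - x| = ∑ k ∈ range m, |mv x k| := by
    apply (Finset.sum_eq_sum_iff_of_le (fun x _ => lower x)).mp
    rw [hmid, st2_sum_net hn]
  have E2 : ∀ k ∈ range m, ∑ x ∈ Finset.Icc (1:ℤ) (n:ℤ), |mv x k| = 2 * g k := by
    apply (Finset.sum_eq_sum_iff_of_le upper).mp
    rw [← swap, hmid, sumg2]
  -- now fix k₀
  have hgk : 0 < g k₀ := by have := hinc k₀ hk₀; simp only [hgdef]; omega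
  -- find the up-mover
  have hex : ∃ y ∈ Finset.Icc (1:ℤ) (n:ℤ), (P (k₀+1) y - a k₀) % (n:ℤ) = 0 := by
    by_contra hno
    push_neg at hno
    have hb : ∑ x ∈ Finset.Icc (1:ℤ) (n:ℤ), |mv x k₀| ≤ g k₀ := by
      have hsub : ∑ x ∈ (Finset.Icc (1:ℤ) (n:ℤ)).filter (fun x => mv x k₀ ≠ 0), |mv x k₀|
          = ∑ x ∈ Finset.Icc (1:ℤ) (n:ℤ), |mv x k₀| := by
        apply Finset.sum_filter_of_ne
        intro x _ hne hc
        rw [hc] at hne; simp at hne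
      rw [← hsub]
      -- all movers are ≡ a (k₀+1), so at most one mover
      have hcard : ((Finset.Icc (1:ℤ) (n:ℤ)).filter (fun x => mv x k₀ ≠ 0)).card ≤ 1 := by
        apply Finset.card_le_one.mpr
        intro x hx y hy
        have hx' := Finset.mem_filter.mp hx
        have hy' := Finset.mem_filter.mp hy
        have cls : ∀ z, z ∈ Finset.Icc (1:ℤ) (n:ℤ) → mv z k₀ ≠ 0 →
            (P (k₀+1) z - a (k₀+1)) % (n:ℤ) = 0 := by
          intro z hz hmz
          rcases st2_mu_cases hf hchain hk₀ z with ⟨h1, _⟩ | ⟨h1, _⟩ | ⟨_, _, h3⟩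
          · exact absurd h1 (hno z hz)
          · exact h1
          · exact absurd h3 hmz
        have h1 := cls x hx'.1 hx'.2
        have h2 := cls y hy'.1 hy'.2
        apply st2_rep_eq hx'.1 hy'.1
        apply st2_suffixProd_emod_inj hf (k := k₀+1)
        have : P (k₀+1) x - P (k₀+1) y
            = (P (k₀+1) x - a (k₀+1)) - (P (k₀+1) y - a (k₀+1)) := by ring
        rw [this, Int.sub_emod, h1, h2]; simp
      calc ∑ x ∈ (Finset.Icc (1:ℤ) (n:ℤ)).filter (fun x => mv x k₀ ≠ 0), |mv x k₀|
          ≤ ∑ _x ∈ (Finset.Icc (1:ℤ) (n:ℤ)).filter (fun x => mv x k₀ ≠ 0), g k₀ := by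
            apply Finset.sum_le_sum
            intro x _
            rcases st2_mu_cases hf hchain hk₀ x with ⟨_, h2⟩ | ⟨_, h2⟩ | ⟨_, _, h3⟩
            · simp only [hmv]; rw [h2, abs_of_pos hgk]
            · simp only [hmv]; rw [h2, abs_neg, abs_of_pos hgk]
            · simp only [hmv]; rw [h3]; simp; omega
        _ = _ • g k₀ := Finset.sum_const _
        _ ≤ 1 * g k₀ := by
            rw [nsmul_eq_mul]
            exact mul_le_mul_of_nonneg_right (by exact_mod_cast hcard) (le_of_lt hgk)
        _ = g k₀ := one_mul _
    have := E2 k₀ (mem_range.mpr hk₀)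
    omega
  obtain ⟨y, hy, hyc⟩ := hex
  have hmuy : mv y k₀ = g k₀ := by
    rcases st2_mu_cases hf hchain hk₀ y with ⟨_, h2⟩ | ⟨h1, _⟩ | ⟨h1, _, _⟩
    · exact h2
    · exfalso
      apply st2_chain_incong hf hchain hk₀
      apply st2_emod_comm
      have : a (k₀+1) - a k₀ = (P (k₀+1) y - a k₀) - (P (k₀+1) y - a (k₀+1)) := by ring
      rw [this, Int.sub_emod, hyc, h1]; simp
    · exact absurd hyc h1
  have Ey := E1 y hy
  -- sign argument: lam n y - y > 0
  have hnetpos : 0 < lam n y - y := by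
    by_contra hle
    push_neg at hle
    have habs : |lam n y - y| = -(lam n y - y) := abs_of_nonpos hle
    have h0 : ∑ k ∈ range m, (|mv y k| + mv y k) = 0 := by
      rw [Finset.sum_add_distrib, ← Ey, ← net_eq, habs]
      ring
    have hterm := (Finset.sum_eq_zero_iff_of_nonneg
      (fun j _ => by linarith [neg_abs_le (mv y j)])).mp h0 k₀ (mem_range.mpr hk₀)
    rw [hmuy, abs_of_pos hgk] at hterm
    omega
  have hy0 : y % (n:ℤ) ≠ 0 := by
    intro h
    rw [st2_lam_zero h] at hnetpos
    have h2 : (2:ℤ) ≤ (n:ℤ) := by exact_mod_cast hn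
    nlinarith
  have hnet : lam n y - y = (n:ℤ) := by rw [st2_lam_ne hy0]; ring
  have hle : g k₀ ≤ (n:ℤ) := by
    have h1 : |mv y k₀| ≤ ∑ j ∈ range m, |mv y j| :=
      Finset.single_le_sum (f := fun j => |mv y j|) (fun j _ => abs_nonneg _)
        (mem_range.mpr hk₀)
    rw [hmuy, abs_of_pos hgk] at h1
    rw [← Ey, hnet] at h1
    rwa [abs_of_nonneg (by positivity : (0:ℤ) ≤ (n:ℤ))] at h1
  have hne : g k₀ ≠ (n:ℤ) := by
    intro h
    apply hg0 k₀ hk₀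
    rw [h]; simp
  simp only [hgdef] at hle hne ⊢
  omega

end Stmt2Aux4
section Stmt2Aux5

open Finset

/-- number of steps at which the trajectory of `x` moves -/
noncomputable def st2cc (l : List (ℤ → ℤ)) (x : ℤ) : ℕ :=
  ((Finset.range l.length).filter
    (fun k => suffixProd l k x - suffixProd l (k+1) x ≠ 0)).card

lemma st2_cc_rep {n : ℕ} {l : List (ℤ → ℤ)} (hf : ∀ t ∈ l, IsAffRefl n t)
    {a : ℕ → ℤ} (hchain : ∀ k : ℕ, ∀ h : k < l.length, l.get ⟨k, h⟩ = affRefl n (a k) (a (k + 1)))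
    {xa : ℤ} (hcong : (xa - a l.length) % (n:ℤ) = 0) :
    ∃ c0 : ℤ, ∀ k, k ≤ l.length → suffixProd l k xa = a k + c0 * n := by
  obtain ⟨c0, hc0⟩ := Int.dvd_of_emod_eq_zero hcong
  refine ⟨c0, fun k hk => ?_⟩
  have hxa : xa = a l.length + c0 * (n:ℤ) := by rw [mul_comm] at hc0; omega
  rw [hxa, st2_suffixProd_equiv hf, st2_chain_traj hf hchain k hk]

lemma st2_cc_xa {n : ℕ} {l : List (ℤ → ℤ)} (hf : ∀ t ∈ l, IsAffRefl n t)
    {a : ℕ → ℤ} (hchain : ∀ k : ℕ, ∀ h : k < l.length, l.get ⟨k, h⟩ = affRefl n (a k) (a (k + 1)))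
    {xa : ℤ} (hcong : (xa - a l.length) % (n:ℤ) = 0) :
    st2cc l xa = l.length := by
  obtain ⟨c0, hc0⟩ := st2_cc_rep hf hchain hcong
  unfold st2cc
  rw [Finset.filter_true_of_mem, Finset.card_range]
  intro k hk
  rw [mem_range] at hk
  rw [hc0 k (by omega), hc0 (k+1) (by omega)]
  have hne : (a k - a (k+1)) ≠ 0 := by
    intro h
    apply st2_chain_incong hf hchain hk
    rw [h]; simp
  omega

lemma st2_netabs {n : ℕ} {l : List (ℤ → ℤ)} (hf : ∀ t ∈ l, IsAffRefl n t)
    (hprod : listProd l = lam n)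
    {a : ℕ → ℤ} (hchain : ∀ k : ℕ, ∀ h : k < l.length, l.get ⟨k, h⟩ = affRefl n (a k) (a (k + 1)))
    (hsmall : ∀ k : ℕ, k < l.length → |a (k + 1) - a k| < (n:ℤ)) (x : ℤ) :
    |lam n x - x| ≤ ((n:ℤ) - 1) * (st2cc l x : ℤ) := by
  classical
  rw [st2_net_telescope hprod x]
  calc |∑ k ∈ range l.length, (suffixProd l k x - suffixProd l (k+1) x)|
      ≤ ∑ k ∈ range l.length, |suffixProd l k x - suffixProd l (k+1) x| :=
        Finset.abs_sum_le_sum_abs _ _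
    _ = ∑ k ∈ (range l.length).filter
          (fun k => suffixProd l k x - suffixProd l (k+1) x ≠ 0),
          |suffixProd l k x - suffixProd l (k+1) x| := by
        rw [Finset.sum_filter_of_ne]
        intro k _ hne hc
        rw [hc] at hne; simp at hne
    _ ≤ ∑ k ∈ (range l.length).filter
          (fun k => suffixProd l k x - suffixProd l (k+1) x ≠ 0), ((n:ℤ) - 1) := by
        apply Finset.sum_le_sum
        intro k hk
        have hk' := Finset.mem_filter.mp hk
        have hkm := mem_range.mp hk'.1
        have hs := hsmall k hkm
        rcases st2_mu_cases hf hchain hkm x with ⟨_, h2⟩ | ⟨_, h2⟩ | ⟨_, _, h3⟩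
        · rw [h2]; omega
        · rw [h2, abs_neg]; omega
        · exact absurd h3 hk'.2
    _ = (st2cc l x : ℤ) * ((n:ℤ) - 1) := by
        rw [Finset.sum_const, nsmul_eq_mul]; rfl
    _ = ((n:ℤ) - 1) * (st2cc l x : ℤ) := mul_comm _ _

lemma st2_cc_two {n : ℕ} (hn : 2 ≤ n) {l : List (ℤ → ℤ)} (hf : ∀ t ∈ l, IsAffRefl n t)
    (hprod : listProd l = lam n)
    {a : ℕ → ℤ} (hchain : ∀ k : ℕ, ∀ h : k < l.length, l.get ⟨k, h⟩ = affRefl n (a k) (a (k + 1)))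
    (hsmall : ∀ k : ℕ, k < l.length → |a (k + 1) - a k| < (n:ℤ))
    {x : ℤ} (hx : x ∈ Finset.Icc (1:ℤ) (n:ℤ)) (hxn : x ≠ (n:ℤ)) : 2 ≤ st2cc l x := by
  have hx' := Finset.mem_Icc.mp hx
  have hmod : x % (n:ℤ) ≠ 0 := by
    rw [Int.emod_eq_of_lt (by omega) (by omega)]; omega
  have hnet : |lam n x - x| = (n:ℤ) := by
    rw [st2_lam_ne hmod, show x + (n:ℤ) - x = (n:ℤ) by ring]
    exact abs_of_nonneg (by positivity)
  have h1 := st2_netabs hf hprod hchain hsmall x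
  rw [hnet] at h1
  by_contra hc
  push_neg at hc
  have : (st2cc l x : ℤ) ≤ 1 := by exact_mod_cast Nat.lt_succ_iff.mp hc
  have h2 : ((n:ℤ) - 1) * (st2cc l x : ℤ) ≤ ((n:ℤ) - 1) * 1 := by
    apply mul_le_mul_of_nonneg_left this
    have : (2:ℤ) ≤ (n:ℤ) := by exact_mod_cast hn
    omega
  omega

lemma st2_cc_n {n : ℕ} (hn : 2 ≤ n) {l : List (ℤ → ℤ)} (hf : ∀ t ∈ l, IsAffRefl n t)
    (hprod : listProd l = lam n)
    {a : ℕ → ℤ} (hchain : ∀ k : ℕ, ∀ h : k < l.length, l.get ⟨k, h⟩ = affRefl n (a k) (a (k + 1)))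
    (hsmall : ∀ k : ℕ, k < l.length → |a (k + 1) - a k| < (n:ℤ)) :
    n ≤ st2cc l (n:ℤ) := by
  have hn' : (2:ℤ) ≤ (n:ℤ) := by exact_mod_cast hn
  have hnet : |lam n (n:ℤ) - (n:ℤ)| = (n:ℤ) * ((n:ℤ) - 1) := by
    rw [st2_lam_zero (by simp)]
    rw [show (n:ℤ) - (n:ℤ) * ((n:ℤ) - 1) - (n:ℤ) = -((n:ℤ) * ((n:ℤ) - 1)) by ring, abs_neg]
    apply abs_of_nonneg
    nlinarith
  have h1 := st2_netabs hf hprod hchain hsmall (n:ℤ)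
  rw [hnet] at h1
  have h2 : (n:ℤ) ≤ (st2cc l (n:ℤ) : ℤ) := by nlinarith
  exact_mod_cast h2

lemma st2_dc (n : ℕ) (l : List (ℤ → ℤ)) :
    ∑ x ∈ Finset.Icc (1:ℤ) (n:ℤ), st2cc l x
      = ∑ k ∈ Finset.range l.length, ((Finset.Icc (1:ℤ) (n:ℤ)).filter
          (fun x => suffixProd l k x - suffixProd l (k+1) x ≠ 0)).card := by
  classical
  unfold st2cc
  simp only [Finset.card_filter]
  rw [Finset.sum_comm]

end Stmt2Aux5
section Stmt2Aux6

open Finset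

lemma st2_claim2 {n : ℕ} (hn : 2 ≤ n) {l : List (ℤ → ℤ)} (hfact : IsFactorization n l)
    (hlen : l.length = 2 * n - 2)
    {a : ℕ → ℤ} (hchain : ∀ k : ℕ, ∀ h : k < l.length, l.get ⟨k, h⟩ = affRefl n (a k) (a (k + 1)))
    (hsmall : ∀ k : ℕ, k < l.length → |a (k + 1) - a k| < (n:ℤ)) :
    ∃ b : ℕ → ℤ,
      (∀ k : ℕ, ∀ h : k < l.length, l.get ⟨k, h⟩ = affRefl n (b k) (b (k + 1))) ∧
      (∀ k : ℕ, k < l.length → b k < b (k + 1)) := by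
  classical
  obtain ⟨hf, hprod⟩ := hfact
  set m := l.length with hmdef
  have hm : m = 2 * n - 2 := hlen
  have hn' : (2:ℤ) ≤ (n:ℤ) := by exact_mod_cast hn
  have hg0 : ∀ k, k < m → (a (k+1) - a k) % (n:ℤ) ≠ 0 := by
    intro k hk hc
    exact st2_chain_incong hf hchain hk (st2_emod_comm hc)
  have hgne : ∀ k, k < m → a (k+1) - a k ≠ 0 := by
    intro k hk hc
    apply hg0 k hk; rw [hc]; simp
  have ha0 : lam n (a m) = a 0 := by
    have := st2_chain_traj hf hchain 0 (by omega)
    rw [st2_suffixProd_zero, hprod] at this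
    exact this
  have hdup : ∀ k ∈ range m, ((Finset.Icc (1:ℤ) (n:ℤ)).filter
      (fun x => suffixProd l k x - suffixProd l (k+1) x ≠ 0)).card ≤ 2 := by
    intro k hk
    exact st2_movers_card hn hf hchain (mem_range.mp hk)
  have hupper : ∑ x ∈ Finset.Icc (1:ℤ) (n:ℤ), st2cc l x ≤ 2 * m := by
    rw [st2_dc n l]
    calc ∑ k ∈ range m, _ ≤ ∑ _k ∈ range m, 2 := Finset.sum_le_sum hdup
      _ = 2 * m := by rw [Finset.sum_const, card_range, smul_eq_mul, mul_comm]
  have hcardIcc : (Finset.Icc (1:ℤ) (n:ℤ)).card = n := by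
    rw [Int.card_Icc]
    simp
  by_cases hclass : (a m) % (n:ℤ) = 0
  · -- case (i): the chain starts (and ends) in class 0; show it is increasing
    have hcongn : ((n:ℤ) - a m) % (n:ℤ) = 0 := by
      apply Int.emod_eq_zero_of_dvd
      have h1 : (n:ℤ) ∣ a m := Int.dvd_of_emod_eq_zero hclass
      exact dvd_sub (dvd_refl _) h1
    obtain ⟨c0, hc0⟩ := st2_cc_rep hf hchain hcongn
    have hccn : st2cc l (n:ℤ) = m := st2_cc_xa hf hchain hcongn
    have hnIcc : (n:ℤ) ∈ Finset.Icc (1:ℤ) (n:ℤ) := by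
      rw [Finset.mem_Icc]; omega
    -- lower bound on the total count
    have hlower : ∀ x ∈ Finset.Icc (1:ℤ) (n:ℤ),
        (if x = (n:ℤ) then m else 2) ≤ st2cc l x := by
      intro x hx
      by_cases hxn : x = (n:ℤ)
      · rw [if_pos hxn, hxn, hccn]
      · rw [if_neg hxn]
        exact st2_cc_two hn hf hprod hchain hsmall hx hxn
    have hLB : ∑ x ∈ Finset.Icc (1:ℤ) (n:ℤ), (if x = (n:ℤ) then m else 2)
        = m + 2 * (n - 1) := by
      have hsplit : Finset.Icc (1:ℤ) (n:ℤ) = insert (n:ℤ) (Finset.Icc (1:ℤ) ((n:ℤ) - 1)) := by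
        ext x; simp only [Finset.mem_Icc, Finset.mem_insert]; omega
      rw [hsplit, Finset.sum_insert (by simp), if_pos rfl]
      have : ∀ x ∈ Finset.Icc (1:ℤ) ((n:ℤ) - 1), (if x = (n:ℤ) then m else 2) = 2 := by
        intro x hx
        rw [Finset.mem_Icc] at hx
        rw [if_neg (by omega)]
      rw [Finset.sum_congr rfl this, Finset.sum_const, Int.card_Icc, smul_eq_mul]
      congr 1
      rw [mul_comm]
      congr 1
      omega
    have htotal : m + 2 * (n - 1) = 2 * m := by omega
    have hsand : ∑ x ∈ Finset.Icc (1:ℤ) (n:ℤ), st2cc l x = 2 * m := by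
      have h1 := Finset.sum_le_sum hlower
      rw [hLB] at h1
      omega
    -- each step moves exactly two representatives
    have Ecard : ∀ k ∈ range m, ((Finset.Icc (1:ℤ) (n:ℤ)).filter
        (fun x => suffixProd l k x - suffixProd l (k+1) x ≠ 0)).card = 2 := by
      apply (Finset.sum_eq_sum_iff_of_le hdup).mp
      rw [← st2_dc n l, hsand, Finset.sum_const, card_range, smul_eq_mul, mul_comm]
    -- show the chain is increasing
    refine ⟨a, hchain, fun k hk => ?_⟩
    -- find an up-mover y (in the class of a k at time k+1)
    have hex : ∃ y ∈ Finset.Icc (1:ℤ) (n:ℤ),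
        (suffixProd l k y - suffixProd l (k+1) y ≠ 0) ∧
        (suffixProd l (k+1) y - a k) % (n:ℤ) = 0 := by
      by_contra hno
      push_neg at hno
      have hcard1 : ((Finset.Icc (1:ℤ) (n:ℤ)).filter
          (fun x => suffixProd l k x - suffixProd l (k+1) x ≠ 0)).card ≤ 1 := by
        apply Finset.card_le_one.mpr
        intro x hx y hy
        have hx' := Finset.mem_filter.mp hx
        have hy' := Finset.mem_filter.mp hy
        have cls : ∀ z, z ∈ Finset.Icc (1:ℤ) (n:ℤ) →
            suffixProd l k z - suffixProd l (k+1) z ≠ 0 →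
            (suffixProd l (k+1) z - a (k+1)) % (n:ℤ) = 0 := by
          intro z hz hmz
          rcases st2_mu_cases hf hchain hk z with ⟨h1, _⟩ | ⟨h1, _⟩ | ⟨_, _, h3⟩
          · exact absurd h1 (hno z hz hmz)
          · exact h1
          · exact absurd h3 hmz
        have h1 := cls x hx'.1 hx'.2
        have h2 := cls y hy'.1 hy'.2
        apply st2_rep_eq hx'.1 hy'.1
        apply st2_suffixProd_emod_inj hf (k := k+1)
        have : suffixProd l (k+1) x - suffixProd l (k+1) y
            = (suffixProd l (k+1) x - a (k+1)) - (suffixProd l (k+1) y - a (k+1)) := by ring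
        rw [this, Int.sub_emod, h1, h2]; simp
      have := Ecard k (mem_range.mpr hk)
      omega
    obtain ⟨y, hy, hymv, hyc⟩ := hex
    have hmvy : suffixProd l k y - suffixProd l (k+1) y = a (k+1) - a k := by
      rcases st2_mu_cases hf hchain hk y with ⟨_, h2⟩ | ⟨h1, _⟩ | ⟨h1, _, _⟩
      · exact h2
      · exfalso
        apply st2_chain_incong hf hchain hk
        apply st2_emod_comm
        have : a (k+1) - a k =
            (suffixProd l (k+1) y - a k) - (suffixProd l (k+1) y - a (k+1)) := by ring
        rw [this, Int.sub_emod, hyc, h1]; simp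
      · exact absurd hyc h1
    -- y is not the representative n
    have hyn : y ≠ (n:ℤ) := by
      rintro rfl
      have := hc0 (k+1) (by omega)
      apply st2_chain_incong hf hchain hk
      apply st2_emod_comm
      have heq : a (k+1) - a k = (suffixProd l (k+1) (n:ℤ) - a k) - c0 * (n:ℤ) := by omega
      rw [heq]
      rw [Int.sub_emod, hyc]
      simp [Int.mul_emod_left]
    -- y's total count is exactly 2
    have hcy : st2cc l y = 2 := by
      have h1 := (Finset.sum_eq_sum_iff_of_le hlower).mp (by rw [hLB, htotal, hsand]) y hy
      rw [if_neg hyn] at h1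
      exact h1.symm
    -- net displacement of y is n
    have hy' := Finset.mem_Icc.mp hy
    have hynet : lam n y - y = (n:ℤ) := by
      rw [st2_lam_ne (by rw [Int.emod_eq_of_lt (by omega) (by omega)]; omega)]
      ring
    -- the other moves of y sum to at most n - 1
    have hkmem : k ∈ (range m).filter
        (fun j => suffixProd l j y - suffixProd l (j+1) y ≠ 0) := by
      rw [Finset.mem_filter]
      refine ⟨mem_range.mpr hk, ?_⟩
      rw [hmvy]
      exact hgne k hk
    have herase : ∑ j ∈ (range m).erase k,
        (suffixProd l j y - suffixProd l (j+1) y) ≤ (n:ℤ) - 1 := by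
      calc ∑ j ∈ (range m).erase k, (suffixProd l j y - suffixProd l (j+1) y)
          ≤ ∑ j ∈ (range m).erase k, |suffixProd l j y - suffixProd l (j+1) y| :=
            Finset.sum_le_sum (fun j _ => le_abs_self _)
        _ = ∑ j ∈ ((range m).erase k).filter
              (fun j => suffixProd l j y - suffixProd l (j+1) y ≠ 0),
              |suffixProd l j y - suffixProd l (j+1) y| := by
            rw [Finset.sum_filter_of_ne]
            intro j _ hne hc
            rw [hc] at hne; simp at hne
        _ ≤ ∑ j ∈ ((range m).erase k).filter
              (fun j => suffixProd l j y - suffixProd l (j+1) y ≠ 0), ((n:ℤ) - 1) := by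
            apply Finset.sum_le_sum
            intro j hj
            have hj' := Finset.mem_filter.mp hj
            have hjm := mem_range.mp (Finset.mem_of_mem_erase hj'.1)
            have hs := hsmall j hjm
            rcases st2_mu_cases hf hchain hjm y with ⟨_, h2⟩ | ⟨_, h2⟩ | ⟨_, _, h3⟩
            · rw [h2]; omega
            · rw [h2, abs_neg]; omega
            · exact absurd h3 hj'.2
        _ ≤ (n:ℤ) - 1 := by
            rw [Finset.sum_const, nsmul_eq_mul]
            have hcard : (((range m).erase k).filter
                (fun j => suffixProd l j y - suffixProd l (j+1) y ≠ 0)).card = 1 := by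
              rw [Finset.filter_erase, Finset.card_erase_of_mem hkmem]
              unfold st2cc at hcy
              rw [← hmdef] at hcy
              omega
            rw [hcard]
            simp
    have hsum_y : ∑ j ∈ range m, (suffixProd l j y - suffixProd l (j+1) y) = (n:ℤ) := by
      rw [← st2_net_telescope hprod y, hynet]
    have hadd : suffixProd l k y - suffixProd l (k+1) y
        + ∑ j ∈ (range m).erase k, (suffixProd l j y - suffixProd l (j+1) y) = (n:ℤ) := by
      rw [← hsum_y]
      exact Finset.add_sum_erase (range m)
        (fun j => suffixProd l j y - suffixProd l (j+1) y) (mem_range.mpr hk)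
    rw [hmvy] at hadd
    omega
  · -- case (ii): chain not in class 0; forces n = 2, explicit construction
    -- the representative of the chain's class
    set xa : ℤ := (a m) % (n:ℤ) with hxadef
    have hxa1 : 1 ≤ xa := by
      have h0 : 0 ≤ xa := Int.emod_nonneg _ (by omega)
      omega
    have hxalt : xa < (n:ℤ) := Int.emod_lt_of_pos _ (by omega)
    have hxaIcc : xa ∈ Finset.Icc (1:ℤ) (n:ℤ) := Finset.mem_Icc.mpr ⟨hxa1, by omega⟩
    have hxan : xa ≠ (n:ℤ) := by omega
    have hcong : (xa - a m) % (n:ℤ) = 0 := by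
      apply Int.emod_eq_zero_of_dvd
      refine ⟨-(a m / (n:ℤ)), ?_⟩
      rw [hxadef, Int.emod_def]; ring
    obtain ⟨c0, hc0⟩ := st2_cc_rep hf hchain hcong
    have hccxa : st2cc l xa = m := st2_cc_xa hf hchain hcong
    have hccn := st2_cc_n hn hf hprod hchain hsmall
    have hc2 : ∀ x ∈ Finset.Icc (1:ℤ) (n:ℤ), x ≠ (n:ℤ) → 2 ≤ st2cc l x :=
      fun x hx hxn => st2_cc_two hn hf hprod hchain hsmall hx hxn
    have hlower : ∀ x ∈ Finset.Icc (1:ℤ) (n:ℤ),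
        (2 + (if x = xa then m - 2 else 0) + (if x = (n:ℤ) then n - 2 else 0) : ℕ)
          ≤ st2cc l x := by
      intro x hx
      by_cases h1 : x = xa
      · rw [if_pos h1, if_neg (by rw [h1]; exact hxan), h1, hccxa]
        omega
      · rw [if_neg h1]
        by_cases h2 : x = (n:ℤ)
        · rw [if_pos h2, h2]
          have := hccn
          omega
        · rw [if_neg h2]
          have := hc2 x hx h2
          omega
    have hsum_lower := Finset.sum_le_sum hlower
    have hLB : ∑ x ∈ Finset.Icc (1:ℤ) (n:ℤ),
        (2 + (if x = xa then m - 2 else 0) + (if x = (n:ℤ) then n - 2 else 0) : ℕ)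
          = 2 * n + (m - 2) + (n - 2) := by
      rw [Finset.sum_add_distrib, Finset.sum_add_distrib]
      congr 1
      · congr 1
        · rw [Finset.sum_const, hcardIcc, smul_eq_mul, mul_comm]
        · rw [Finset.sum_ite_eq' (Finset.Icc (1:ℤ) (n:ℤ)) xa (fun _ => m - 2),
            if_pos hxaIcc]
      · rw [Finset.sum_ite_eq' (Finset.Icc (1:ℤ) (n:ℤ)) (n:ℤ) (fun _ => n - 2),
          if_pos (Finset.mem_Icc.mpr ⟨by omega, le_refl _⟩)]
    have hn2 : n = 2 := by
      rw [hLB] at hsum_lower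
      omega
    -- now n = 2, m = 2; the chain is a 0 > a 1 > a 2; reverse it
    subst hn2
    have hm2 : m = 2 := by omega
    have hma : a m = a 2 := by rw [hm2]
    have hk0 : 0 < l.length := by omega
    have hk1 : 1 < l.length := by omega
    have hchain0 := hchain 0 hk0
    have hchain1 := hchain 1 hk1
    have hs0' := abs_lt.mp (hsmall 0 (by omega))
    have hs1' := abs_lt.mp (hsmall 1 (by omega))
    have hg0' := hg0 0 (by omega)
    have hg1' := hg0 1 (by omega)
    have ha2 : a 0 = a 2 + 2 := by
      rw [hxadef] at hclass
      rw [hma] at ha0 hclass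
      rw [st2_lam_ne hclass] at ha0
      push_cast at ha0
      omega
    push_cast at hs0' hs1' hg0' hg1'
    have e0 : a 1 = a 0 - 1 := by omega
    have e1 : a 2 = a 0 - 2 := by omega
    refine ⟨fun k => a 0 - 1 + (k:ℤ), ?_, ?_⟩
    · intro k hk
      have hk2 : k = 0 ∨ k = 1 := by omega
      have hij1 : ((a 0) - (a 0 - 1)) % ((2:ℕ):ℤ) ≠ 0 := by push_cast; omega
      have hij2 : ((a 0 + 1) - (a 0)) % ((2:ℕ):ℤ) ≠ 0 := by push_cast; omega
      obtain rfl | rfl := hk2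
      · have hthis : l.get ⟨0, hk⟩ = affRefl 2 (a 0) (a 0 - 1) := by
          rw [hchain0, e0]
        rw [hthis, st2_affRefl_symm hij1]
        congr 1 <;> push_cast <;> ring
      · have hthis : l.get ⟨1, hk⟩ = affRefl 2 (a 0 - 1) (a 0 - 2) := by
          rw [hchain1, e0, e1]
        have harg1 : (a 0 - 1) + 1 * ((2:ℕ):ℤ) = a 0 + 1 := by push_cast; ring
        have harg2 : (a 0 - 2) + 1 * ((2:ℕ):ℤ) = a 0 := by push_cast; ring
        have h2 := st2_affRefl_shift (n := 2) (a 0 - 1) (a 0 - 2) 1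
        rw [harg1, harg2] at h2
        rw [hthis, ← h2, st2_affRefl_symm hij2]
        congr 1 <;> push_cast <;> ring
    · intro k _
      push_cast
      omega
end Stmt2Aux6
section Stmt2Aux7

lemma st2_treelike_chain {n : ℕ} {l : List (ℤ → ℤ)} (hTL : IsTreeLike n l) :
    ∃ a : ℕ → ℤ,
      (∀ k : ℕ, ∀ h : k < l.length, l.get ⟨k, h⟩ = affRefl n (a k) (a (k + 1))) ∧
      (∀ k : ℕ, k < l.length → a k < a (k + 1)) := by
  obtain ⟨_, _, A, B, hAB⟩ := hTL
  set a : ℕ → ℤ := fun k => Nat.rec (A 0) (fun k ak => B (k + 1) + (ak - A k)) k with hadef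
  have hastep : ∀ k, a (k + 1) = B (k + 1) + (a k - A k) := fun k => rfl
  have hdvd : ∀ k, k ≤ l.length → (n:ℤ) ∣ (a k - A k) := by
    intro k hk
    induction k with
    | zero => simp [hadef]
    | succ k ih =>
      have hk' : k < l.length := by omega
      have h1 := (hAB k hk').2.2
      have h2 := ih (by omega)
      rw [hastep k]
      have h3 : (n:ℤ) ∣ (A (k + 1) - B (k + 1)) := Int.dvd_of_emod_eq_zero h1
      have heq : B (k + 1) + (a k - A k) - A (k + 1)
          = (a k - A k) - (A (k + 1) - B (k + 1)) := by ring
      rw [heq]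
      exact dvd_sub h2 h3
  refine ⟨a, ?_, ?_⟩
  · intro k h
    obtain ⟨c, hc⟩ := hdvd k (le_of_lt h)
    rw [(hAB k h).1]
    have hb : a (k + 1) = B (k + 1) + c * (n:ℤ) := by rw [hastep k, hc]; ring
    have hA : a k = A k + c * (n:ℤ) := by rw [mul_comm] at hc; omega
    rw [hA, hb]
    exact (st2_affRefl_shift (A k) (B (k + 1)) c).symm
  · intro k h
    have := (hAB k h).2.1
    rw [hastep k]
    omega

end Stmt2Aux7
/-- A factorization of `λₙ` into `2n-2` affine reflections is tree-like
iff there are integers `a₀, …, a_{2n-2}` with `r_ℓ = ((a_{ℓ-1}, a_ℓ))` and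
`|a_ℓ - a_{ℓ-1}| < n` for every `ℓ`. -/
theorem stmt2 (n : ℕ) (hn : 2 ≤ n) (l : List (ℤ → ℤ))
    (hfact : IsFactorization n l) (hlen : l.length = 2 * n - 2) :
    IsTreeLike n l ↔
      ∃ a : ℕ → ℤ, ∀ k : ℕ, ∀ h : k < l.length,
        l.get ⟨k, h⟩ = affRefl n (a k) (a (k + 1)) ∧ |a (k + 1) - a k| < (n : ℤ) := by
  constructor
  · intro hTL
    obtain ⟨a, hchain, hinc⟩ := st2_treelike_chain hTL
    have hlt := st2_claim1 hn hfact hchain hinc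
    refine ⟨a, fun k h => ⟨hchain k h, ?_⟩⟩
    rw [abs_of_pos (by have := hinc k h; omega)]
    exact hlt k h
  · rintro ⟨a, ha⟩
    have hchain : ∀ k : ℕ, ∀ h : k < l.length, l.get ⟨k, h⟩ = affRefl n (a k) (a (k + 1)) :=
      fun k h => (ha k h).1
    have hsmall : ∀ k : ℕ, k < l.length → |a (k + 1) - a k| < (n:ℤ) :=
      fun k h => (ha k h).2
    obtain ⟨b, hbchain, hbinc⟩ := st2_claim2 hn hfact hlen hchain hsmall
    exact ⟨hfact, hlen, b, b, fun k h => ⟨hbchain k h, hbinc k h, by simp⟩⟩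
end
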